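/- arXiv:1011.6520 — 2 statements merged into one kernel-verified Lean document; each statement's English description precedes it below -/
import Mathlib

section
/- Fix n ≥ 1, an alphabet X = {x₁,…,xₙ} and a set W ⊆ X² of words of length 2 over X. The following conditions are equivalent: (a) the graph Γ_W is an acyclic tournament; (b) for every m ≥ 0 the number of normal words of length m is |N^(m)| = C(n+m−1, m); (c) there is an enumeration (permutation) y₁, …, yₙ of x₁, …, xₙ such that W = {y_j y_i : 1 ≤ i < j ≤ n}; (d) there is an enumeration y₁, …, yₙ of x₁, …, xₙ such that the set of all normal words (of all lengths) is exactly the set of ordered monomials {y₁^{α₁} y₂^{α₂} ⋯ yₙ^{αₙ} : αᵢ ≥ 0}. -/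
set_option linter.unusedSectionVars false
set_option maxHeartbeats 4000000

/-- A word over the alphabet `X` is normal (mod `W`) if none of its length-2
factors lies in `W`. -/
def IsNormalWord {X : Type*} (W : Set (X × X)) (l : List X) : Prop :=
  l.Chain' (fun a b => (a, b) ∉ W)

/-- The graph Γ_W (with edge x → y iff xy ∈ W) is an acyclic tournament. -/
def IsAcyclicTournament {X : Type*} (W : Set (X × X)) : Prop :=
  (∀ x : X, (x, x) ∉ W) ∧
  (∀ x y : X, x ≠ y → Xor' ((x, y) ∈ W) ((y, x) ∈ W)) ∧
  (∀ x : X, ¬ Relation.TransGen (fun a b => (a, b) ∈ W) x x)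

set_option linter.deprecated false

attribute [local simp] List.Chain'

theorem List.chain'_append {α : Type*} {R : α → α → Prop} {l₁ l₂ : List α} :
    List.Chain' R (l₁ ++ l₂) ↔ List.Chain' R l₁ ∧ List.Chain' R l₂ ∧
      ∀ x ∈ l₁.getLast?, ∀ y ∈ l₂.head?, R x y := List.isChain_append

theorem List.chain'_cons {α : Type*} {R : α → α → Prop} {x y : α} {l : List α} :
    List.Chain' R (x :: y :: l) ↔ R x y ∧ List.Chain' R (y :: l) := List.isChain_cons_cons

theorem List.chain'_pair {α : Type*} {R : α → α → Prop} {x y : α} :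
    List.Chain' R [x, y] ↔ R x y := List.isChain_pair

theorem List.chain'_replicate_of_rel {α : Type*} {r : α → α → Prop} (n : ℕ) {a : α}
    (h : r a a) : List.Chain' r (List.replicate n a) := List.isChain_replicate_of_rel n h

theorem List.chain'_iff_pairwise {α : Type*} {R : α → α → Prop} [IsTrans α R] {l : List α} :
    List.Chain' R l ↔ List.Pairwise R l := List.isChain_iff_pairwise

theorem List.chain'_map {α β : Type*} {R : α → α → Prop} (f : β → α) {l : List β} :
    List.Chain' R (List.map f l) ↔ List.Chain' (fun a b => R (f a) (f b)) l := List.isChain_map f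

theorem List.chain'_reverse {α : Type*} {R : α → α → Prop} {l : List α} :
    List.Chain' R (List.reverse l) ↔ List.Chain' (flip R) l := List.isChain_reverse

theorem List.exists_chain_of_relationReflTransGen {α : Type*} {r : α → α → Prop} {a b : α}
    (h : Relation.ReflTransGen r a b) :
    ∃ l, List.Chain r a l ∧ List.getLast (a :: l) (List.cons_ne_nil _ _) = b :=
  List.exists_isChain_cons_of_relationReflTransGen h

theorem List.eq_of_perm_of_sorted {α : Type*} {r : α → α → Prop} [IsAntisymm α r]
    {l₁ l₂ : List α} (hp : l₁.Perm l₂) (hs₁ : List.Pairwise r l₁) (hs₂ : List.Pairwise r l₂) :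
    l₁ = l₂ := List.Perm.eq_of_pairwise' hs₁ hs₂ hp

namespace MonTFAE
open List Finset

lemma choose_le_pow' (a : ℕ) : ∀ m : ℕ, (a + m).choose a ≤ (m + 1) ^ a := by
  induction a with
  | zero => intro m; simp
  | succ a ih =>
    intro m
    induction m with
    | zero => simp
    | succ m ihm =>
      have hp : (a + 1 + (m + 1)).choose (a + 1)
          = (a + m + 1).choose a + (a + m + 1).choose (a + 1) := by
        have : a + 1 + (m + 1) = (a + m + 1) + 1 := by omega
        rw [this, Nat.choose_succ_succ]
      rw [hp]
      have h1 : (a + m + 1).choose a ≤ (m + 2) ^ a := by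
        have := ih (m + 1)
        simpa [Nat.add_assoc] using this
      have h2 : (a + m + 1).choose (a + 1) ≤ (m + 1) * (m + 2) ^ a := by
        have h3 : (a + 1 + m).choose (a + 1) ≤ (m + 1) ^ (a + 1) := ihm
        have h4 : (m + 1) ^ (a + 1) ≤ (m + 1) * (m + 2) ^ a := by
          rw [pow_succ, mul_comm]
          exact Nat.mul_le_mul_left _ (Nat.pow_le_pow_left (by omega) a)
        have : a + m + 1 = a + 1 + m := by omega
        rw [this]
        exact h3.trans h4
      calc (a + m + 1).choose a + (a + m + 1).choose (a + 1)
          ≤ (m + 2) ^ a + (m + 1) * (m + 2) ^ a := Nat.add_le_add h1 h2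
        _ = (m + 2) ^ (a + 1) := by ring
    
lemma pow_succ_le_choose (a r : ℕ) : (r + 1) ^ a ≤ (a + a * r).choose a := by
  induction a with
  | zero => simp
  | succ a ih =>
    have key : (a + 1 + (a + 1) * r).choose (a + 1)
        = (r + 1) * ((a * (r + 1) + r).choose a) := by
      set M := a * (r + 1) + r with hM
      have hN : a + 1 + (a + 1) * r = M + 1 := by rw [hM]; ring
      have := Nat.add_one_mul_choose_eq M a
      -- (M+1) * M.choose a = (M+1).choose (a+1) * (a+1)
      have hM1 : M + 1 = (a + 1) * (r + 1) := by rw [hM]; ring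
      apply Nat.eq_of_mul_eq_mul_right (show 0 < a + 1 by omega)
      calc (a + 1 + (a + 1) * r).choose (a + 1) * (a + 1)
          = (M + 1).choose (a + 1) * (a + 1) := by rw [hN]
        _ = (M + 1) * M.choose a := (Nat.add_one_mul_choose_eq M a).symm
        _ = (a + 1) * (r + 1) * M.choose a := by rw [hM1]
        _ = (r + 1) * M.choose a * (a + 1) := by ring
    rw [key, pow_succ, mul_comm ((r+1)^a) (r+1)]
    refine Nat.mul_le_mul_left _ ?_
    refine ih.trans (Nat.choose_le_choose a ?_)
    have : a + a * r = a * (r + 1) := by ring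
    omega

lemma two_mul_le_two_pow {r : ℕ} (h : 2 ≤ r) : 2 * r ≤ 2 ^ r := by
  induction r with
  | zero => omega
  | succ r ih =>
    rcases Nat.lt_or_ge r 2 with hr | hr
    · interval_cases r <;> simp_all <;> omega
    · have := ih hr
      have h2 : 2 ^ r + 2 ≤ 2 ^ r + 2 ^ r := by
        have : 2 ≤ 2 ^ r := by
          calc 2 ≤ 2 * r := by omega
            _ ≤ 2 ^ r := this
        omega
      calc 2 * (r + 1) = 2 * r + 2 := by ring
        _ ≤ 2 ^ r + 2 := by omega
        _ ≤ 2 ^ r + 2 ^ r := h2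
        _ = 2 ^ (r + 1) := by ring

lemma add_lt_two_pow (c r : ℕ) (h : c + 2 ≤ r) : r + c < 2 ^ r := by
  have h1 : r + c < 2 * r := by omega
  exact h1.trans_le (two_mul_le_two_pow (by omega))

lemma exists_forall_pow_lt_two_pow (a : ℕ) :
    ∃ T : ℕ, ∀ t, T ≤ t → (t + 1) ^ a < 2 ^ t := by
  induction a with
  | zero => exact ⟨1, fun t ht => by simpa using Nat.one_lt_two_pow (by omega)⟩
  | succ a ih =>
    obtain ⟨T, hT⟩ := ih
    refine ⟨2 * (max T (2 * a + 5)) + 2, fun t ht => ?_⟩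
    set s := t / 2 with hs
    have hs2 : 2 * s ≤ t := by omega
    have hsge : max T (2 * a + 5) ≤ s := by
      rw [hs]
      rw [Nat.le_div_iff_mul_le (by omega)]
      omega
    have hsT : T ≤ s := le_trans (le_max_left _ _) hsge
    have hsa : 2 * a + 5 ≤ s := le_trans (le_max_right _ _) hsge
    have hb1 : (s + 1) ^ a < 2 ^ s := hT s hsT
    have hb2 : 2 ^ (a + 1) * (s + 1) ≤ 2 ^ s := by
      have hr : s + 1 < 2 ^ (s - a - 1) := by
        have : (s - a - 1) + (a + 2) ≤ 2 * (s - a - 1) := by omega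
        have h' := add_lt_two_pow (a + 2) (s - a - 1) (by omega)
        omega
      have : 2 ^ (a + 1) * (s + 1) < 2 ^ (a + 1) * 2 ^ (s - a - 1) := by
        have hp : 0 < 2 ^ (a + 1) := Nat.pow_pos (by omega)
        exact Nat.mul_lt_mul_of_le_of_lt (le_refl _) hr (by omega)
      have he : (a + 1) + (s - a - 1) = s := by omega
      rw [← pow_add, he] at this
      omega
    have hstep : t + 1 ≤ 2 * (s + 1) := by omega
    calc (t + 1) ^ (a + 1) ≤ (2 * (s + 1)) ^ (a + 1) := Nat.pow_le_pow_left hstep _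
      _ = 2 ^ (a + 1) * (s + 1) * (s + 1) ^ a := by rw [mul_pow]; ring
      _ ≤ 2 ^ s * (s + 1) ^ a := Nat.mul_le_mul_right _ hb2
      _ < 2 ^ s * 2 ^ s := by
          have hp : 0 < 2 ^ s := Nat.pow_pos (by omega)
          exact Nat.mul_lt_mul_of_le_of_lt (le_refl _) hb1 (by omega)
      _ = 2 ^ (2 * s) := by rw [← pow_add]; ring_nf
      _ ≤ 2 ^ t := Nat.pow_le_pow_right (by omega) hs2

lemma exists_mul_pow_lt_two_pow (C a : ℕ) : ∃ t, 1 ≤ t ∧ C * (t + 1) ^ a < 2 ^ t := by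
  obtain ⟨T, hT⟩ := exists_forall_pow_lt_two_pow (C + a)
  refine ⟨max T 1, le_max_right _ _, ?_⟩
  set t := max T 1 with ht
  have h1 : C * (t + 1) ^ a ≤ (t + 1) ^ (C + a) := by
    rw [pow_add]
    refine Nat.mul_le_mul_right _ ?_
    calc C ≤ 2 ^ C := (@Nat.lt_two_pow_self C).le
      _ ≤ (t + 1) ^ C := Nat.pow_le_pow_left (by omega) _
  exact h1.trans_lt (hT t (le_max_left _ _))

lemma exists_kt_pow_lt_two_pow (k a : ℕ) : ∃ t, 1 ≤ t ∧ (k * t + 2) ^ a < 2 ^ t := by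
  obtain ⟨t, ht1, ht⟩ := exists_mul_pow_lt_two_pow ((k + 2) ^ a) a
  refine ⟨t, ht1, ?_⟩
  calc (k * t + 2) ^ a ≤ ((k + 2) * (t + 1)) ^ a := by
        refine Nat.pow_le_pow_left (by nlinarith) _
    _ = (k + 2) ^ a * (t + 1) ^ a := mul_pow _ _ _
    _ < 2 ^ t := ht


section Defs
variable {X : Type*} [Fintype X] [DecidableEq X]

def NE (W : Set (X × X)) (a b : X) : Prop := (a, b) ∉ W

/-- all words of length m -/
def allW (X : Type*) [Fintype X] [DecidableEq X] : ℕ → Finset (List X)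
  | 0 => {[]}
  | (m+1) => (Finset.univ ×ˢ allW X m).image fun p => p.1 :: p.2

open Classical in
/-- normal words of length m with letters in S -/
noncomputable def WS (W : Set (X × X)) (S : Finset X) (m : ℕ) : Finset (List X) :=
  (allW X m).filter (fun l => l.Chain' (NE W) ∧ ∀ a ∈ l, a ∈ S)

/-- closed walk at v within S (both endpoints included) -/
def IsCW (W : Set (X × X)) (S : Finset X) (v : X) (c : List X) : Prop :=
  c.head? = some v ∧ c.getLast? = some v ∧ 2 ≤ c.length ∧ c.Chain' (NE W) ∧ ∀ a ∈ c, a ∈ S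

/-- uniqueness of closed walks of each length -/
def CWU (W : Set (X × X)) : Prop :=
  ∀ (v : X) (c d : List X), c.head? = some v → d.head? = some v →
    c.getLast? = some v → d.getLast? = some v →
    c.Chain' (NE W) → d.Chain' (NE W) → c.length = d.length → c = d

def RecV (W : Set (X × X)) (S : Finset X) (v : X) : Prop := ∃ c, IsCW W S v c

def CycS (W : Set (X × X)) (S : Finset X) : Set (Finset X) :=
  {A | ∃ v c, IsCW W S v c ∧ A = c.toFinset}

noncomputable def qq (W : Set (X × X)) (S : Finset X) : ℕ := (CycS W S).ncard

open Classical in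
noncomputable def WSfrom (W : Set (X × X)) (v : X) (S : Finset X) (m : ℕ) :
    Finset (List X) :=
  (WS W S m).filter (fun l => l.head? = some v)

def wb (Bc Bd : List X) (bs : List Bool) : List X :=
  (bs.map fun b => if b then Bc else Bd).flatten

end Defs

section Main
variable {X : Type*} [Fintype X] [DecidableEq X] {W : Set (X × X)}

lemma mem_allW {m : ℕ} {l : List X} : l ∈ allW X m ↔ l.length = m := by
  induction m generalizing l with
  | zero => cases l <;> simp [allW]
  | succ m ih => cases l <;> simp [allW, ih]

lemma mem_WS {S : Finset X} {m : ℕ} {l : List X} :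
    l ∈ WS W S m ↔ l.length = m ∧ l.Chain' (NE W) ∧ ∀ a ∈ l, a ∈ S := by
  simp only [WS, Finset.mem_filter, mem_allW, and_assoc]

lemma WS_zero (S : Finset X) : WS W S 0 = {[]} := by
  ext l
  simp only [mem_WS, Finset.mem_singleton, List.length_eq_zero_iff]
  constructor
  · rintro ⟨rfl, _⟩; rfl
  · rintro rfl; simp

lemma IsCW.mono {S : Finset X} {v : X} {c : List X} (h : IsCW W S v c) {T : Finset X}
    (hST : S ⊆ T) : IsCW W T v c :=
  ⟨h.1, h.2.1, h.2.2.1, h.2.2.2.1, fun a ha => hST (h.2.2.2.2 a ha)⟩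

lemma CycS_mono {S T : Finset X} (hST : S ⊆ T) : CycS W S ⊆ CycS W T := by
  rintro A ⟨v, c, hc, rfl⟩
  exact ⟨v, c, hc.mono hST, rfl⟩

lemma CycS_finite (S : Finset X) : (CycS W S).Finite := Set.toFinite _

lemma qq_mono {S T : Finset X} (hST : S ⊆ T) : qq W S ≤ qq W T :=
  Set.ncard_le_ncard (CycS_mono hST) (CycS_finite T)

/-- extract a closed walk from a word whose head reappears -/
lemma cw_of_head_mem {S : Finset X} {v : X} {t : List X}
    (hch : (v :: t).Chain' (NE W)) (hmem : ∀ a ∈ v :: t, a ∈ S) (hv : v ∈ t) :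
    ∃ c, IsCW W S v c := by
  obtain ⟨t1, t2, rfl⟩ := List.append_of_mem hv
  refine ⟨(v :: t1) ++ [v], ?_, ?_, ?_, ?_, ?_⟩
  · simp
  · exact List.getLast?_concat
  · simp
  · have hpre : (v :: t1) ++ [v] <+: v :: (t1 ++ v :: t2) := ⟨t2, by simp⟩
    exact hch.prefix hpre
  · intro a ha
    apply hmem
    simp only [List.mem_append, List.mem_cons, List.mem_singleton] at ha ⊢
    tauto

/-- a word with a duplicate letter yields a closed walk -/
lemma cw_of_dup {S : Finset X} {l : List X} (hch : l.Chain' (NE W))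
    (hmem : ∀ a ∈ l, a ∈ S) (hnd : ¬ l.Nodup) : ∃ v c, IsCW W S v c := by
  induction l with
  | nil => simp at hnd
  | cons a t ih =>
    by_cases hat : a ∈ t
    · exact ⟨a, cw_of_head_mem hch hmem hat⟩
    · have hndt : ¬ t.Nodup := by
        intro h
        exact hnd (List.nodup_cons.mpr ⟨hat, h⟩)
      exact ih hch.tail (fun x hx => hmem x (List.mem_cons_of_mem a hx)) hndt

lemma WS_empty_of_no_cyc {S : Finset X} (hq : CycS W S = ∅) {m : ℕ} (hm : S.card < m) :
    WS W S m = ∅ := by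
  rw [Finset.eq_empty_iff_forall_notMem]
  intro l hl
  rw [mem_WS] at hl
  obtain ⟨hlen, hch, hmem⟩ := hl
  have hnd : l.Nodup := by
    by_contra hnd
    obtain ⟨v, c, hc⟩ := cw_of_dup hch hmem hnd
    rw [Set.eq_empty_iff_forall_notMem] at hq
    exact hq c.toFinset ⟨v, c, hc, rfl⟩
  have : l.length ≤ S.card := by
    have h1 : l.toFinset.card = l.length := List.toFinset_card_of_nodup hnd
    have h2 : l.toFinset ⊆ S := fun a ha => hmem a (List.mem_toFinset.mp ha)
    have := Finset.card_le_card h2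
    omega
  omega

lemma head?_dropLast {l : List X} (h : 2 ≤ l.length) : l.dropLast.head? = l.head? := by
  match l with
  | a :: b :: t => simp
  | [] => simp at h
  | [a] => simp at h

lemma eq_singleton_of_length_one {l : List X} {v : X} (h1 : l.length = 1)
    (h2 : l.head? = some v) : l = [v] := by
  match l with
  | [a] => simp only [List.head?_cons, Option.some.injEq] at h2; rw [h2]
  | [] => simp at h1
  | a :: b :: t => simp at h1

lemma wb_chain {Bc Bd : List X} {v : X}
    (hc : (Bc ++ [v]).Chain' (NE W)) (hd : (Bd ++ [v]).Chain' (NE W))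
    (hch : Bc.head? = some v) (hdh : Bd.head? = some v) :
    ∀ bs : List Bool, (wb Bc Bd bs ++ [v]).Chain' (NE W) ∧
      (wb Bc Bd bs ++ [v]).head? = some v := by
  intro bs
  induction bs with
  | nil => simp [wb]
  | cons b bs ih =>
    have hre : wb Bc Bd (b :: bs) ++ [v] = (if b then Bc else Bd) ++ (wb Bc Bd bs ++ [v]) := by
      simp [wb, List.flatten_cons, List.append_assoc]
    have hB : (if b then Bc else Bd) ++ [v] = (if b then Bc ++ [v] else Bd ++ [v]) := by
      split <;> rfl
    have hBc : ((if b then Bc else Bd) ++ [v]).Chain' (NE W) := by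
      rw [hB]; split <;> assumption
    have hBh : (if b then Bc else Bd).head? = some v := by split <;> assumption
    have hBne : (if b then Bc else Bd) ≠ [] := by
      intro h
      rw [h] at hBh
      simp at hBh
    obtain ⟨hchain, hhead⟩ := ih
    rw [hre]
    constructor
    · rw [List.chain'_append]
      obtain ⟨h1, _, h3⟩ := List.chain'_append.mp hBc
      exact ⟨h1, hchain, fun x hx y hy => h3 x hx y (by rw [hhead] at hy; simpa using hy)⟩
    · rw [List.head?_append_of_ne_nil _ hBne]
      exact hBh

lemma wb_length {Bc Bd : List X} {k : ℕ} (hc : Bc.length = k) (hd : Bd.length = k)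
    (bs : List Bool) : (wb Bc Bd bs).length = k * bs.length := by
  induction bs with
  | nil => simp [wb]
  | cons b bs ih =>
    have : wb Bc Bd (b :: bs) = (if b then Bc else Bd) ++ wb Bc Bd bs := by
      simp [wb, List.flatten_cons]
    rw [this, List.length_append, ih]
    have : (if b then Bc else Bd).length = k := by split <;> assumption
    rw [this]; simp; ring

lemma wb_inj {Bc Bd : List X} {k : ℕ} (hc : Bc.length = k) (hd : Bd.length = k)
    (hne : Bc ≠ Bd) (v : X) :
    ∀ bs bs' : List Bool, bs.length = bs'.length →
      wb Bc Bd bs ++ [v] = wb Bc Bd bs' ++ [v] → bs = bs' := by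
  intro bs
  induction bs with
  | nil => intro bs' h _; exact (List.length_eq_zero_iff.mp h.symm).symm ▸ rfl
  | cons b bs ih =>
    intro bs' hlen heq
    match bs' with
    | [] => simp at hlen
    | b' :: bs' =>
      have hre : ∀ (x : Bool) (xs : List Bool),
          wb Bc Bd (x :: xs) ++ [v] = (if x then Bc else Bd) ++ (wb Bc Bd xs ++ [v]) := by
        intro x xs; simp [wb, List.flatten_cons, List.append_assoc]
      rw [hre, hre] at heq
      have hlb : (if b then Bc else Bd).length = (if b' then Bc else Bd).length := by
        have h1 : (if b then Bc else Bd).length = k := by split <;> assumption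
        have h2 : (if b' then Bc else Bd).length = k := by split <;> assumption
        rw [h1, h2]
      obtain ⟨hBeq, hrest⟩ := List.append_inj heq hlb
      have hbb : b = b' := by
        by_contra hbb
        apply hne
        match b, b' with
        | true, false => exact hBeq
        | false, true => exact hBeq.symm
        | true, true => exact absurd rfl hbb
        | false, false => exact absurd rfl hbb
      subst hbb
      have : bs = bs' := ih bs' (by simpa using hlen) hrest
      rw [this]

lemma cwu_of_counts (n : ℕ) (hn : 1 ≤ n) (hcard : Fintype.card X = n)
    (hb : ∀ m, (WS W Finset.univ m).card = (n + m - 1).choose m) : CWU W := by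
  intro v c d hch hdh hcl hdl hcc hdc hlen
  by_contra hne
  have hc0 : c ≠ [] := by rintro rfl; simp at hch
  have hlc : 1 ≤ c.length := List.length_pos_iff.mpr hc0
  rcases eq_or_lt_of_le hlc with h1 | h2
  · -- length 1 : both [v]
    have hcv := eq_singleton_of_length_one h1.symm hch
    have hdv := eq_singleton_of_length_one (hlen ▸ h1.symm) hdh
    exact hne (hcv.trans hdv.symm)
  · -- length ≥ 2
    set k := c.length - 1 with hk
    have hk1 : 1 ≤ k := by omega
    have hd0 : d ≠ [] := by rintro rfl; simp at hdh
    set Bc := c.dropLast with hBc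
    set Bd := d.dropLast with hBd
    have hgl : c.getLast hc0 = v := by
      rwa [List.getLast?_eq_getLast hc0, Option.some.injEq] at hcl
    have hgld : d.getLast hd0 = v := by
      rwa [List.getLast?_eq_getLast hd0, Option.some.injEq] at hdl
    have hcrec : Bc ++ [v] = c := by
      rw [hBc, ← hgl]; exact List.dropLast_append_getLast hc0
    have hdrec : Bd ++ [v] = d := by
      rw [hBd, ← hgld]; exact List.dropLast_append_getLast hd0
    have hkc : Bc.length = k := by rw [hBc, List.length_dropLast]
    have hkd : Bd.length = k := by rw [hBd, List.length_dropLast]; omega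
    have hBch : Bc.head? = some v := by
      rw [hBc, head?_dropLast (by omega)]; exact hch
    have hBdh : Bd.head? = some v := by
      rw [hBd, head?_dropLast (by omega)]; exact hdh
    have hBne : Bc ≠ Bd := fun h => hne (by rw [← hcrec, ← hdrec, h])
    have hccB : (Bc ++ [v]).Chain' (NE W) := by rw [hcrec]; exact hcc
    have hdcB : (Bd ++ [v]).Chain' (NE W) := by rw [hdrec]; exact hdc
    obtain ⟨t, ht1, ht⟩ := exists_kt_pow_lt_two_pow k (n - 1)
    set m := k * t + 1 with hm
    have hub : (WS W Finset.univ m).card < 2 ^ t := by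
      rw [hb m]
      have he1 : n + m - 1 = (n - 1) + m := by omega
      rw [he1]
      have he2 : ((n - 1) + m).choose m = ((n - 1) + m).choose (n - 1) := by
        have h3 := Nat.choose_symm (Nat.le_add_left m (n - 1))
        have h4 : (n - 1) + m - m = n - 1 := by omega
        rw [h4] at h3
        exact h3.symm
      rw [he2]
      calc ((n - 1) + m).choose (n - 1) ≤ (m + 1) ^ (n - 1) := choose_le_pow' (n - 1) m
        _ = (k * t + 2) ^ (n - 1) := by congr 1
        _ < 2 ^ t := ht
    have hlb : 2 ^ t ≤ (WS W Finset.univ m).card := by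
      have hmaps : ∀ f : Fin t → Bool, wb Bc Bd (List.ofFn f) ++ [v] ∈ WS W Finset.univ m := by
        intro f
        rw [mem_WS]
        refine ⟨?_, (wb_chain hccB hdcB hBch hBdh _).1, fun a _ => Finset.mem_univ a⟩
        rw [List.length_append, wb_length hkc hkd]
        simp [hm]
      calc 2 ^ t = Fintype.card (Fin t → Bool) := by simp
        _ = (Finset.univ : Finset (Fin t → Bool)).card := Finset.card_univ.symm
        _ ≤ (WS W Finset.univ m).card := by
            refine Finset.card_le_card_of_injOn
              (fun f => wb Bc Bd (List.ofFn f) ++ [v]) (fun f _ => hmaps f) ?_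
            intro f _ g _ hfg
            exact List.ofFn_injective
              (wb_inj hkc hkd hBne v _ _ (by simp) hfg)
    omega

lemma wb_mem {B : List X} {bs : List Bool} (h : bs ≠ []) (a : X) :
    a ∈ wb B B bs ↔ a ∈ B := by
  have hif : ∀ b : Bool, (if b then B else B) = B := fun b => by cases b <;> rfl
  rw [wb, List.mem_flatten]
  constructor
  · rintro ⟨l, hl, hal⟩
    simp only [List.mem_map] at hl
    obtain ⟨b, _, rfl⟩ := hl
    rwa [hif] at hal
  · intro ha
    obtain ⟨b, bs', rfl⟩ := List.exists_cons_of_ne_nil h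
    exact ⟨B, List.mem_map.mpr ⟨b, by simp, hif b⟩, ha⟩

/-- rotation of a closed walk -/
lemma rot {S : Finset X} {u z : X} {c : List X} (hc : IsCW W S u c) (hz : z ∈ c) :
    ∃ e, IsCW W S z e ∧ e.toFinset = c.toFinset := by
  obtain ⟨hch, hcl, hlen, hcc, hmem⟩ := hc
  rcases eq_or_ne z u with rfl | hzu
  · exact ⟨c, ⟨hch, hcl, hlen, hcc, hmem⟩, rfl⟩
  have hc0 : c ≠ [] := by rintro rfl; simp at hch
  have hgl : c.getLast hc0 = u := by
    rwa [List.getLast?_eq_getLast hc0, Option.some.injEq] at hcl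
  have hcrec : c.dropLast ++ [u] = c := by
    rw [← hgl]; exact List.dropLast_append_getLast hc0
  set B := c.dropLast with hB
  have hBh : B.head? = some u := by rw [hB, head?_dropLast hlen]; exact hch
  have hzB : z ∈ B := by
    rw [← hcrec] at hz
    rcases List.mem_append.mp hz with h | h
    · exact h
    · simp at h; exact absurd h hzu
  obtain ⟨p, s, hps⟩ := List.append_of_mem hzB
  have hp0 : p ≠ [] := by
    rintro rfl
    rw [hps] at hBh
    simp at hBh
    exact hzu hBh
  obtain ⟨u0, p', rfl⟩ := List.exists_cons_of_ne_nil hp0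
  have huu : u0 = u := by
    rw [hps] at hBh
    simpa using hBh
  subst huu
  have hcfull : c = (u0 :: p') ++ (z :: s ++ [u0]) := by
    rw [← hcrec, hps]; simp
  rw [hcfull] at hcc
  obtain ⟨hc1, hc2, hlink1⟩ := List.chain'_append.mp hcc
  obtain ⟨hc3, hc4, hlink2⟩ := List.chain'_append.mp (show ((z :: s) ++ [u0]).Chain' (NE W) by
    simpa using hc2)
  refine ⟨(z :: s) ++ ((u0 :: p') ++ [z]), ⟨?_, ?_, ?_, ?_, ?_⟩, ?_⟩
  · simp
  · rw [show (z :: s) ++ ((u0 :: p') ++ [z]) = ((z :: s) ++ (u0 :: p')) ++ [z] by simp,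
      List.getLast?_concat]
  · simp; omega
  · rw [List.chain'_append]
    refine ⟨hc3, ?_, ?_⟩
    · rw [List.chain'_append]
      refine ⟨hc1, by simp, ?_⟩
      intro x hx y hy
      simp only [List.head?_cons, Option.mem_def, Option.some.injEq] at hy
      subst hy
      exact hlink1 x hx z (by simp)
    · intro x hx y hy
      simp at hy
      subst hy
      exact hlink2 x hx u0 (by simp)
  · intro a ha
    apply hmem
    rw [hcfull]
    simp only [List.mem_append, List.mem_cons, List.mem_singleton] at ha ⊢
    tauto
  · ext a
    simp only [List.mem_toFinset, hcfull]
    simp only [List.mem_append, List.mem_cons, List.mem_singleton, List.not_mem_nil]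
    tauto

/-- under CWU, any two closed walks at the same vertex cover the same set -/
lemma toFinset_eq_of_cw (hcwu : CWU W) {S : Finset X} {u : X} {c d : List X}
    (hc : IsCW W S u c) (hd : IsCW W S u d) : c.toFinset = d.toFinset := by
  obtain ⟨hch, hcl, hlenc, hcc, hmemc⟩ := hc
  obtain ⟨hdh, hdl, hlend, hdc, hmemd⟩ := hd
  have hc0 : c ≠ [] := by rintro rfl; simp at hch
  have hd0 : d ≠ [] := by rintro rfl; simp at hdh
  have hglc : c.getLast hc0 = u := by
    rwa [List.getLast?_eq_getLast hc0, Option.some.injEq] at hcl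
  have hgld : d.getLast hd0 = u := by
    rwa [List.getLast?_eq_getLast hd0, Option.some.injEq] at hdl
  have hcrec : c.dropLast ++ [u] = c := by
    rw [← hglc]; exact List.dropLast_append_getLast hc0
  have hdrec : d.dropLast ++ [u] = d := by
    rw [← hgld]; exact List.dropLast_append_getLast hd0
  set Bc := c.dropLast with hBc
  set Bd := d.dropLast with hBd
  have hBch : Bc.head? = some u := by rw [hBc, head?_dropLast hlenc]; exact hch
  have hBdh : Bd.head? = some u := by rw [hBd, head?_dropLast hlend]; exact hdh
  have hccB : (Bc ++ [u]).Chain' (NE W) := by rw [hcrec]; exact hcc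
  have hdcB : (Bd ++ [u]).Chain' (NE W) := by rw [hdrec]; exact hdc
  set kc := Bc.length with hkc
  set kd := Bd.length with hkd
  have hkc1 : 1 ≤ kc := by
    rw [hkc, hBc, List.length_dropLast]; omega
  have hkd1 : 1 ≤ kd := by
    rw [hkd, hBd, List.length_dropLast]; omega
  set e1 := wb Bc Bc (List.replicate kd true) ++ [u] with he1
  set e2 := wb Bd Bd (List.replicate kc true) ++ [u] with he2
  obtain ⟨he1c, he1h⟩ := wb_chain hccB hccB hBch hBch (List.replicate kd true)
  obtain ⟨he2c, he2h⟩ := wb_chain hdcB hdcB hBdh hBdh (List.replicate kc true)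
  have hlen1 : e1.length = kc * kd + 1 := by
    rw [he1, List.length_append, wb_length rfl rfl]
    simp [hkc]
  have hlen2 : e2.length = kd * kc + 1 := by
    rw [he2, List.length_append, wb_length rfl rfl]
    simp [hkd]
  have heq : e1 = e2 := by
    refine hcwu u e1 e2 he1h he2h ?_ ?_ he1c he2c (by rw [hlen1, hlen2]; ring)
    · rw [he1, List.getLast?_concat]
    · rw [he2, List.getLast?_concat]
  have hrep1 : (List.replicate kd true) ≠ ([] : List Bool) := by
    simp; omega
  have hrep2 : (List.replicate kc true) ≠ ([] : List Bool) := by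
    simp; omega
  have hm1 : ∀ a : X, a ∈ e1 ↔ a ∈ c := by
    intro a
    rw [he1, ← hcrec]
    simp only [List.mem_append, List.mem_singleton]
    rw [wb_mem hrep1]
  have hm2 : ∀ a : X, a ∈ e2 ↔ a ∈ d := by
    intro a
    rw [he2, ← hdrec]
    simp only [List.mem_append, List.mem_singleton]
    rw [wb_mem hrep2]
  ext a
  simp only [List.mem_toFinset]
  rw [← hm1 a, ← hm2 a, heq]

lemma cyc_eq_of_inter (hcwu : CWU W) {S : Finset X} {A B : Finset X}
    (hA : A ∈ CycS W S) (hB : B ∈ CycS W S) (hz : (A ∩ B).Nonempty) : A = B := by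
  obtain ⟨u, c, hc, rfl⟩ := hA
  obtain ⟨u', d, hd, rfl⟩ := hB
  obtain ⟨z, hzm⟩ := hz
  rw [Finset.mem_inter, List.mem_toFinset, List.mem_toFinset] at hzm
  obtain ⟨e, he, heq⟩ := rot hc hzm.1
  obtain ⟨f, hf, hfq⟩ := rot hd hzm.2
  rw [← heq, ← hfq]
  exact toFinset_eq_of_cw hcwu he hf

lemma qq_le_of_loopless (hcwu : CWU W) {n : ℕ} (hcard : Fintype.card X = n)
    {x : X} (hx : (x, x) ∈ W) : qq W Finset.univ ≤ n - 1 := by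
  by_contra hq
  push_neg at hq
  set D := CycS W (Finset.univ : Finset X) with hD
  have hfin : D.Finite := Set.toFinite _
  set Df := hfin.toFinset with hDf
  have hcardD : Df.card = qq W Finset.univ := by
    rw [qq, hDf, Set.ncard_eq_toFinset_card _ hfin]
  have hmemD : ∀ A ∈ Df, A ∈ D := by intro A hA; rwa [hDf, Set.Finite.mem_toFinset] at hA
  have hne : ∀ A ∈ Df, A.Nonempty := by
    intro A hA
    obtain ⟨v, c, hc, rfl⟩ := hmemD A hA
    have : v ∈ c := by
      have h0 : c ≠ [] := by rintro rfl; simp [IsCW] at hc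
      exact List.mem_of_mem_head? (by rw [hc.1]; simp)
    exact ⟨v, List.mem_toFinset.mpr this⟩
  have hdisj : ∀ A ∈ Df, ∀ B ∈ Df, A ≠ B → Disjoint A B := by
    intro A hA B hB hAB
    rw [Finset.disjoint_iff_inter_eq_empty]
    by_contra h
    exact hAB (cyc_eq_of_inter hcwu (hmemD A hA) (hmemD B hB)
      (Finset.nonempty_of_ne_empty h))
  have hsum : ∑ A ∈ Df, A.card ≤ n := by
    rw [← Finset.card_biUnion (fun A hA B hB hAB => hdisj A hA B hB hAB)]
    calc (Df.biUnion (fun A => A)).card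
        ≤ (Finset.univ : Finset X).card := Finset.card_le_card (Finset.subset_univ _)
      _ = n := by rw [Finset.card_univ, hcard]
  have hql : n ≤ Df.card := by omega
  have hall1 : ∀ A ∈ Df, A.card = 1 := by
    by_contra hA
    push_neg at hA
    obtain ⟨A₀, hA₀, hA₀c⟩ := hA
    have h2 : 2 ≤ A₀.card := by
      have := Finset.card_pos.mpr (hne A₀ hA₀)
      omega
    have : Df.card < ∑ A ∈ Df, A.card := by
      have := Finset.sum_lt_sum (f := fun _ : Finset X => 1) (g := fun A => A.card)
        (fun A hA => Finset.card_pos.mpr (hne A hA)) ⟨A₀, hA₀, by exact h2⟩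
      simpa using this
    omega
  have hsumeq : ∑ A ∈ Df, A.card = Df.card := by
    rw [Finset.sum_congr rfl hall1]; simp
  have huniv : Df.biUnion (fun A => A) = Finset.univ := by
    apply Finset.eq_univ_of_card
    rw [Finset.card_biUnion (fun A hA B hB hAB => hdisj A hA B hB hAB), hsumeq]
    omega
  have hxmem : x ∈ Df.biUnion (fun A => A) := by rw [huniv]; exact Finset.mem_univ x
  obtain ⟨A, hA, hxA⟩ := Finset.mem_biUnion.mp hxmem
  obtain ⟨a, ha⟩ := Finset.card_eq_one.mp (hall1 A hA)
  have hax : A = {x} := by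
    rw [ha] at hxA ⊢
    have hxa : x = a := by simpa using hxA
    rw [hxa]
  obtain ⟨v, c, hc, hAc⟩ := hmemD A hA
  obtain ⟨hch, hcl, hlen, hcc, _⟩ := hc
  have hallx : ∀ b ∈ c, b = x := by
    intro b hb
    have : b ∈ A := hAc ▸ List.mem_toFinset.mpr hb
    rw [hax] at this
    simpa using this
  obtain ⟨a₁, a₂, t, hct⟩ : ∃ a₁ a₂ t, c = a₁ :: a₂ :: t := by
    match c, hlen with
    | a₁ :: a₂ :: t, _ => exact ⟨a₁, a₂, t, rfl⟩
  have h1 : a₁ = x := hallx a₁ (by rw [hct]; simp)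
  have h2 : a₂ = x := hallx a₂ (by rw [hct]; simp)
  rw [hct] at hcc
  have := (List.chain'_cons.mp hcc).1
  rw [h1, h2] at this
  exact this hx

lemma mem_WSfrom {v : X} {S : Finset X} {m : ℕ} {l : List X} :
    l ∈ WSfrom W v S m ↔ l ∈ WS W S m ∧ l.head? = some v := by
  simp [WSfrom]

lemma WS_le_sum_from {S : Finset X} {m : ℕ} (hm : 1 ≤ m) :
    (WS W S m).card ≤ ∑ v ∈ S, (WSfrom W v S m).card := by
  refine le_trans (Finset.card_le_card ?_) Finset.card_biUnion_le
  intro l hl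
  have hl' := mem_WS.mp hl
  obtain ⟨hlen, hch, hmem⟩ := hl'
  have h0 : l ≠ [] := by
    intro h; rw [h] at hlen; simp at hlen; omega
  obtain ⟨a, t, rfl⟩ := List.exists_cons_of_ne_nil h0
  refine Finset.mem_biUnion.mpr ⟨a, hmem a (by simp), ?_⟩
  rw [mem_WSfrom]
  exact ⟨hl, rfl⟩

lemma head?_dropWhile_not (p : X → Bool) (l : List X) :
    ∀ a, (l.dropWhile p).head? = some a → p a = false := by
  induction l with
  | nil => simp
  | cons x t ih =>
    intro a ha
    by_cases hp : p x = true
    · rw [List.dropWhile_cons_of_pos hp] at ha; exact ih a ha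
    · rw [List.dropWhile_cons_of_neg hp] at ha
      simp only [List.head?_cons, Option.some.injEq] at ha
      subst ha
      simpa using hp

/-- decomposition at the last visit of the head vertex -/
lemma card_WSfrom_le (hcwu : CWU W) (v : X) (S : Finset X) {m : ℕ} (hm : 1 ≤ m) :
    (WSfrom W v S m).card ≤ ∑ j ∈ Finset.range m, (WS W (S.erase v) j).card := by
  classical
  set p : X → Bool := fun x => x ≠ v with hp
  set tl : List X → List X := fun l => (l.reverse.takeWhile p).reverse with htl
  have key : ∀ l ∈ WSfrom W v S m, (tl l) ∈ (Finset.range m).biUnion (fun j => WS W (S.erase v) j)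
      ∧ ∃ pre, l = pre ++ tl l ∧ pre ≠ [] ∧ pre.getLast? = some v ∧ pre.head? = some v := by
    intro l hl
    obtain ⟨hl1, hhead⟩ := mem_WSfrom.mp hl
    obtain ⟨hlen, hch, hmem⟩ := mem_WS.mp hl1
    have hvl : v ∈ l := List.mem_of_mem_head? (by rw [hhead]; rfl)
    set pre : List X := (l.reverse.dropWhile p).reverse with hpre
    have hsplit : l = pre ++ tl l := by
      rw [hpre]
      show l = (l.reverse.dropWhile p).reverse ++ (l.reverse.takeWhile p).reverse
      rw [← List.reverse_append, List.takeWhile_append_dropWhile, List.reverse_reverse]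
    have hd0 : l.reverse.dropWhile p ≠ [] := by
      intro h
      have := List.dropWhile_eq_nil_iff.mp h v (by rwa [List.mem_reverse])
      simp [hp] at this
    have hpre0 : pre ≠ [] := by
      rw [hpre]; simpa using hd0
    have hpreL : pre.getLast? = some v := by
      rw [hpre, List.getLast?_reverse]
      obtain ⟨a, ha⟩ := Option.ne_none_iff_exists'.mp
        (show (l.reverse.dropWhile p).head? ≠ none by simpa using hd0)
      rw [ha]
      have := head?_dropWhile_not p l.reverse a ha
      simp [hp] at this
      rw [this]
    have hpreH : pre.head? = some v := by
      rw [hsplit] at hhead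
      rwa [List.head?_append_of_ne_nil _ hpre0] at hhead
    have hnotv : v ∉ tl l := by
      intro hv
      rw [htl] at hv
      simp only [List.mem_reverse] at hv
      have := List.mem_takeWhile_imp hv
      simp [hp] at this
    have hlenlt : (tl l).length < m := by
      have := congrArg List.length hsplit
      rw [List.length_append] at this
      have h1 : 1 ≤ pre.length := List.length_pos_iff.mpr hpre0
      omega
    refine ⟨Finset.mem_biUnion.mpr ⟨(tl l).length, Finset.mem_range.mpr hlenlt, ?_⟩,
      pre, hsplit, hpre0, hpreL, hpreH⟩
    rw [mem_WS]
    refine ⟨rfl, hch.suffix ⟨pre, hsplit.symm⟩, ?_⟩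
    intro a ha
    refine Finset.mem_erase.mpr ⟨?_, hmem a (by rw [hsplit]; exact List.mem_append_right _ ha)⟩
    intro h; rw [h] at ha; exact hnotv ha
  refine le_trans (Finset.card_le_card_of_injOn tl (fun l hl => (key l hl).1) ?_)
    Finset.card_biUnion_le
  intro l hl l' hl' heq
  obtain ⟨_, pre, hsp, h0, hL, hH⟩ := key l hl
  obtain ⟨_, pre', hsp', h0', hL', hH'⟩ := key l' hl'
  obtain ⟨hlen, hch, _⟩ := mem_WS.mp (mem_WSfrom.mp hl).1
  obtain ⟨hlen', hch', _⟩ := mem_WS.mp (mem_WSfrom.mp hl').1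
  have hchp : pre.Chain' (NE W) := hch.prefix ⟨tl l, hsp.symm⟩
  have hchp' : pre'.Chain' (NE W) := hch'.prefix ⟨tl l', hsp'.symm⟩
  have hplen : pre.length = pre'.length := by
    have e1 := congrArg List.length hsp
    have e2 := congrArg List.length hsp'
    rw [List.length_append] at e1 e2
    rw [heq] at e1
    omega
  have : pre = pre' := hcwu v pre pre' hH hH' hL hL' hchp hchp' hplen
  rw [hsp, hsp', this, heq]

lemma card_WSfrom_le_nonrec {v : X} {S : Finset X} (hnr : ¬ RecV W S v) {m : ℕ}
    (hm : 2 ≤ m) :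
    (WSfrom W v S m).card ≤ (WS W (S.erase v) (m - 1)).card := by
  classical
  have key : ∀ l ∈ WSfrom W v S m, l.tail ∈ WS W (S.erase v) (m - 1) := by
    intro l hl
    obtain ⟨hl1, hhead⟩ := mem_WSfrom.mp hl
    obtain ⟨hlen, hch, hmem⟩ := mem_WS.mp hl1
    have h0 : l ≠ [] := by intro h; rw [h] at hlen; simp at hlen; omega
    obtain ⟨a, t, rfl⟩ := List.exists_cons_of_ne_nil h0
    have hav : a = v := by simpa using hhead
    have hvt : a ∈ t → False := fun hv => hnr (hav ▸ cw_of_head_mem hch hmem hv)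
    rw [mem_WS]
    refine ⟨by simp at hlen ⊢; omega, hch.tail, ?_⟩
    intro b hb
    simp only [List.tail_cons] at hb
    refine Finset.mem_erase.mpr ⟨?_, hmem b (List.mem_cons_of_mem _ hb)⟩
    intro h
    apply hvt
    rw [hav, ← h]
    exact hb
  refine Finset.card_le_card_of_injOn List.tail (fun l hl => key l hl) ?_
  intro l hl l' hl' heq
  obtain ⟨hl1, hhead⟩ := mem_WSfrom.mp hl
  obtain ⟨hl1', hhead'⟩ := mem_WSfrom.mp hl'
  obtain ⟨a, t, rfl⟩ := List.exists_cons_of_ne_nil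
    (by intro h; rw [h] at hhead; simp at hhead : l ≠ [])
  obtain ⟨a', t', rfl⟩ := List.exists_cons_of_ne_nil
    (by intro h; rw [h] at hhead'; simp at hhead' : l' ≠ [])
  have : a = v := by simpa using hhead
  have h2 : a' = v := by simpa using hhead'
  simp only [List.tail_cons] at heq
  rw [this, h2, heq]

lemma qq_pos_of_rec {S : Finset X} {v : X} (hrec : RecV W S v) : 1 ≤ qq W S := by
  obtain ⟨c, hc⟩ := hrec
  have : 0 < (CycS W S).ncard :=
    (Set.ncard_pos (Set.toFinite _)).mpr ⟨c.toFinset, v, c, hc, rfl⟩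
  rw [qq]
  omega

lemma qq_erase_le {S : Finset X} {v : X} (hrec : RecV W S v) :
    qq W (S.erase v) ≤ qq W S - 1 := by
  obtain ⟨P, hP⟩ := hrec
  have hvP : v ∈ P := by
    have h0 : P ≠ [] := by rintro rfl; simp [IsCW] at hP
    exact List.mem_of_mem_head? (by rw [hP.1]; rfl)
  have hPF : P.toFinset ∈ CycS W S := ⟨v, P, hP, rfl⟩
  have hsub : CycS W (S.erase v) ⊆ CycS W S \ {P.toFinset} := by
    rintro A ⟨u, c, hc, rfl⟩
    constructor
    · exact ⟨u, c, ⟨hc.1, hc.2.1, hc.2.2.1, hc.2.2.2.1,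
        fun a ha => Finset.mem_of_mem_erase (hc.2.2.2.2 a ha)⟩, rfl⟩
    · simp only [Set.mem_singleton_iff]
      intro h
      have hvc : v ∈ c.toFinset := by rw [h, List.mem_toFinset]; exact hvP
      rw [List.mem_toFinset] at hvc
      have := hc.2.2.2.2 v hvc
      exact (Finset.mem_erase.mp this).1 rfl
  calc qq W (S.erase v) ≤ (CycS W S \ {P.toFinset}).ncard :=
        Set.ncard_le_ncard hsub (Set.Finite.diff (Set.toFinite _))
    _ = qq W S - 1 := Set.ncard_diff_singleton_of_mem hPF

lemma walk_bound (hcwu : CWU W) :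
    ∀ s : ℕ, ∃ K : ℕ, 1 ≤ K ∧ ∀ S : Finset X, S.card ≤ s → ∀ m : ℕ, 1 ≤ m →
      (WS W S m).card ≤ K * (m + 1) ^ (qq W S - 1) := by
  intro s
  induction s with
  | zero =>
    refine ⟨1, le_refl 1, fun S hS m hm => ?_⟩
    have hempty : WS W S m = ∅ := by
      rw [Finset.eq_empty_iff_forall_notMem]
      intro l hl
      obtain ⟨hlen, _, hmem⟩ := mem_WS.mp hl
      have h0 : l ≠ [] := by intro h; rw [h] at hlen; simp at hlen; omega
      obtain ⟨a, t, rfl⟩ := List.exists_cons_of_ne_nil h0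
      have := hmem a (by simp)
      have hS0 : S = ∅ := Finset.card_eq_zero.mp (le_antisymm hS (Nat.zero_le _))
      rw [hS0] at this
      simp at this
    rw [hempty]
    simp
  | succ s ih =>
    obtain ⟨K, hK1, hK⟩ := ih
    set C := 1 + (s + 1) * K + K with hC
    refine ⟨(s + 1) * C, Nat.one_le_iff_ne_zero.mpr (Nat.mul_ne_zero (by omega) (by omega)), fun S hS m hm => ?_⟩
    set q := qq W S with hq
    have hpow1 : 1 ≤ (m + 1) ^ (q - 1) := Nat.one_le_pow _ _ (by omega)
    have hper : ∀ v ∈ S, (WSfrom W v S m).card ≤ C * (m + 1) ^ (q - 1) := by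
      intro v hv
      have hS' : (S.erase v).card ≤ s := by
        rw [Finset.card_erase_of_mem hv]
        omega
      by_cases hrec : RecV W S v
      · have hq1 : 1 ≤ q := qq_pos_of_rec hrec
        have hq' : qq W (S.erase v) ≤ q - 1 := qq_erase_le hrec
        have hdec := card_WSfrom_le hcwu v S hm
        rcases Nat.eq_zero_or_pos (qq W (S.erase v)) with hq0 | hqpos
        · -- no cycles in the rest
          have hCy : CycS W (S.erase v) = ∅ := by
            have := hq0
            rwa [qq, Set.ncard_eq_zero (Set.toFinite _)] at this
          have hterm : ∀ j, (S.erase v).card < j → (WS W (S.erase v) j).card = 0 := by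
            intro j hj
            rw [WS_empty_of_no_cyc hCy hj]
            simp
          have hsum : ∑ j ∈ Finset.range m, (WS W (S.erase v) j).card
              ≤ ∑ j ∈ Finset.range (s + 1), (WS W (S.erase v) j).card := by
            rw [show ∑ j ∈ Finset.range m, (WS W (S.erase v) j).card
                = ∑ j ∈ (Finset.range m).filter (fun j => j ≤ s), (WS W (S.erase v) j).card by
              refine (Finset.sum_subset (Finset.filter_subset _ _) ?_).symm
              intro j hj hnj
              simp only [Finset.mem_filter, not_and, not_le] at hnj
              exact hterm j (by
                have := hnj (by assumption)
                omega)]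
            refine Finset.sum_le_sum_of_subset ?_
            intro j hj
            simp only [Finset.mem_filter, Finset.mem_range] at hj ⊢
            omega
          have hsum2 : ∑ j ∈ Finset.range (s + 1), (WS W (S.erase v) j).card ≤ (s + 1) * K := by
            calc ∑ j ∈ Finset.range (s + 1), (WS W (S.erase v) j).card
                ≤ ∑ _j ∈ Finset.range (s + 1), K := by
                  refine Finset.sum_le_sum ?_
                  intro j hj
                  rcases Nat.eq_zero_or_pos j with rfl | hj1
                  · rw [WS_zero]; simpa using hK1
                  · calc (WS W (S.erase v) j).card
                        ≤ K * (j + 1) ^ (qq W (S.erase v) - 1) := hK _ hS' j hj1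
                      _ = K := by rw [hq0]; simp
              _ = (s + 1) * K := by simp [mul_comm]
          calc (WSfrom W v S m).card ≤ ∑ j ∈ Finset.range m, (WS W (S.erase v) j).card := hdec
            _ ≤ (s + 1) * K := le_trans hsum hsum2
            _ ≤ C := by omega
            _ ≤ C * (m + 1) ^ (q - 1) := Nat.le_mul_of_pos_right _ (by omega)
        · -- q'' ≥ 1 subcase
          set q2 := qq W (S.erase v) with hq2
          have hsum : ∑ j ∈ Finset.range m, (WS W (S.erase v) j).card
              ≤ (m - 1) * (K * (m + 1) ^ (q2 - 1)) + 1 := by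
            conv_lhs => rw [show m = (m - 1) + 1 by omega]
            rw [Finset.sum_range_succ']
            have h0 : (WS W (S.erase v) 0).card = 1 := by rw [WS_zero]; simp
            rw [h0]
            refine Nat.add_le_add ?_ (le_refl 1)
            calc ∑ j ∈ Finset.range (m - 1), (WS W (S.erase v) (j + 1)).card
                ≤ ∑ _j ∈ Finset.range (m - 1), K * (m + 1) ^ (q2 - 1) := by
                  refine Finset.sum_le_sum ?_
                  intro j hj
                  calc (WS W (S.erase v) (j + 1)).card
                      ≤ K * ((j + 1) + 1) ^ (q2 - 1) := hK _ hS' _ (by omega)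
                    _ ≤ K * (m + 1) ^ (q2 - 1) := by
                        refine Nat.mul_le_mul_left _ (Nat.pow_le_pow_left ?_ _)
                        have := Finset.mem_range.mp hj
                        omega
              _ = (m - 1) * (K * (m + 1) ^ (q2 - 1)) := by
                  rw [Finset.sum_const, smul_eq_mul, Finset.card_range]
          have hfin : (m - 1) * (K * (m + 1) ^ (q2 - 1)) + 1 ≤ C * (m + 1) ^ (q - 1) := by
            have h1 : (m - 1) * (K * (m + 1) ^ (q2 - 1)) ≤ K * (m + 1) ^ q2 := by
              calc (m - 1) * (K * (m + 1) ^ (q2 - 1))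
                  = K * ((m - 1) * (m + 1) ^ (q2 - 1)) := by ring
                _ ≤ K * ((m + 1) * (m + 1) ^ (q2 - 1)) := by
                    refine Nat.mul_le_mul_left _ (Nat.mul_le_mul_right _ (by omega))
                _ = K * (m + 1) ^ q2 := by
                    rw [← pow_succ']
                    congr 2
                    omega
            have h2 : K * (m + 1) ^ q2 ≤ K * (m + 1) ^ (q - 1) :=
              Nat.mul_le_mul_left _ (Nat.pow_le_pow_right (by omega) (by omega))
            have h3 : 1 ≤ (m + 1) ^ (q - 1) := hpow1
            calc (m - 1) * (K * (m + 1) ^ (q2 - 1)) + 1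
                ≤ K * (m + 1) ^ (q - 1) + 1 := by omega
              _ ≤ K * (m + 1) ^ (q - 1) + (m + 1) ^ (q - 1) := by omega
              _ = (K + 1) * (m + 1) ^ (q - 1) := by ring
              _ ≤ C * (m + 1) ^ (q - 1) := Nat.mul_le_mul_right _ (by omega)
          exact le_trans hdec (le_trans hsum hfin)
      · -- head vertex not recurrent
        have hq'' : qq W (S.erase v) ≤ q := qq_mono (Finset.erase_subset _ _)
        rcases eq_or_lt_of_le hm with h1 | h2
        · -- m = 1
          have : WSfrom W v S m ⊆ {[v]} := by
            intro l hl
            obtain ⟨hl1, hhead⟩ := mem_WSfrom.mp hl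
            obtain ⟨hlen, _, _⟩ := mem_WS.mp hl1
            rw [Finset.mem_singleton]
            exact eq_singleton_of_length_one (by omega) hhead
          calc (WSfrom W v S m).card ≤ ({[v]} : Finset (List X)).card := Finset.card_le_card this
            _ = 1 := by simp
            _ ≤ C * (m + 1) ^ (q - 1) := by
                calc 1 ≤ C := by omega
                  _ ≤ C * (m + 1) ^ (q - 1) := Nat.le_mul_of_pos_right _ (by omega)
        · -- m ≥ 2
          have hdec := card_WSfrom_le_nonrec hrec h2
          rcases Nat.eq_zero_or_pos (m - 1) with h0 | hm1
          · omega
          calc (WSfrom W v S m).card ≤ (WS W (S.erase v) (m - 1)).card := hdec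
            _ ≤ K * ((m - 1) + 1) ^ (qq W (S.erase v) - 1) := hK _ hS' _ hm1
            _ ≤ K * (m + 1) ^ (q - 1) := by
                refine Nat.mul_le_mul_left _ ?_
                refine le_trans (Nat.pow_le_pow_left (show (m - 1) + 1 ≤ m + 1 by omega) _) ?_
                exact Nat.pow_le_pow_right (by omega) (by omega)
            _ ≤ C * (m + 1) ^ (q - 1) := Nat.mul_le_mul_right _ (by omega)
    calc (WS W S m).card ≤ ∑ v ∈ S, (WSfrom W v S m).card := WS_le_sum_from hm
      _ ≤ ∑ _v ∈ S, C * (m + 1) ^ (q - 1) := Finset.sum_le_sum hper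
      _ = S.card * (C * (m + 1) ^ (q - 1)) := by rw [Finset.sum_const, smul_eq_mul]
      _ ≤ (s + 1) * (C * (m + 1) ^ (q - 1)) := Nat.mul_le_mul_right _ hS
      _ = (s + 1) * C * (m + 1) ^ (q - 1) := by ring

lemma no_loops {n : ℕ} (hn : 1 ≤ n) (hcard : Fintype.card X = n)
    (hb : ∀ m, (WS W Finset.univ m).card = (n + m - 1).choose m)
    (hcwu : CWU W) : ∀ x : X, (x, x) ∉ W := by
  intro x hx
  rcases eq_or_lt_of_le hn with h1 | h2
  · -- n = 1
    have hb2 := hb 2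
    rw [← h1] at hb2
    norm_num at hb2
    have hne : (WS W Finset.univ 2).Nonempty := by
      rw [← Finset.card_pos, hb2]; omega
    obtain ⟨l, hl⟩ := hne
    obtain ⟨hlen, hch, _⟩ := mem_WS.mp hl
    obtain ⟨a, b, rfl⟩ := List.length_eq_two.mp hlen
    have hab : NE W a b := List.chain'_pair.mp hch
    have hsub : ∀ u v : X, u = v := Fintype.card_le_one_iff.mp (by omega)
    have hxx : NE W x x := by
      have h := hab
      rw [hsub a x, hsub b x] at h
      exact h
    exact hxx hx
  · -- n ≥ 2
    set a := n - 1 with ha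
    have ha1 : 1 ≤ a := by omega
    have hq : qq W Finset.univ ≤ a := by
      have := qq_le_of_loopless hcwu hcard hx
      omega
    obtain ⟨K, hK1, hK⟩ := walk_bound hcwu n
    set r := K * (a + 1) ^ (a - 1) + 1 with hr
    set m := a * r with hm
    have hm1 : 1 ≤ m := by
      rw [hm]
      have : 1 ≤ r := by omega
      exact Nat.one_le_iff_ne_zero.mpr (Nat.mul_ne_zero (by omega) (by omega))
    have hlow : (r + 1) ^ a ≤ (WS W Finset.univ m).card := by
      rw [hb m]
      have he1 : n + m - 1 = a + m := by omega
      rw [he1]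
      have he2 : (a + m).choose m = (a + m).choose a := by
        have h3 := Nat.choose_symm (Nat.le_add_left m a)
        have h4 : a + m - m = a := by omega
        rw [h4] at h3
        exact h3.symm
      rw [he2, hm]
      exact pow_succ_le_choose a r
    have hup : (WS W Finset.univ m).card ≤ K * (m + 1) ^ (a - 1) := by
      calc (WS W Finset.univ m).card
          ≤ K * (m + 1) ^ (qq W Finset.univ - 1) := by
            refine hK Finset.univ ?_ m hm1
            rw [Finset.card_univ, hcard]
        _ ≤ K * (m + 1) ^ (a - 1) := by
            refine Nat.mul_le_mul_left _ (Nat.pow_le_pow_right (by omega) (by omega))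
    have hfin : K * (m + 1) ^ (a - 1) < (r + 1) ^ a := by
      have hb1 : m + 1 ≤ (a + 1) * (r + 1) := by
        rw [hm]
        calc a * r + 1 ≤ a * r + a + r + 1 := by omega
          _ = (a + 1) * (r + 1) := by ring
      have hb2 : K * (m + 1) ^ (a - 1) ≤ K * ((a + 1) ^ (a - 1) * (r + 1) ^ (a - 1)) := by
        refine Nat.mul_le_mul_left _ ?_
        rw [← mul_pow]
        exact Nat.pow_le_pow_left hb1 _
      have hb3 : K * ((a + 1) ^ (a - 1) * (r + 1) ^ (a - 1))
          = (K * (a + 1) ^ (a - 1)) * (r + 1) ^ (a - 1) := by ring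
      have hb4 : (K * (a + 1) ^ (a - 1)) * (r + 1) ^ (a - 1) < (r + 1) * (r + 1) ^ (a - 1) := by
        refine Nat.mul_lt_mul_of_lt_of_le ?_ (le_refl _) (by positivity)
        omega
      have hb5 : (r + 1) * (r + 1) ^ (a - 1) = (r + 1) ^ a := by
        rw [← pow_succ']
        congr 1
        omega
      omega
    omega

lemma step21 {n : ℕ} (hn : 1 ≤ n) (hcard : Fintype.card X = n)
    (hbF : ∀ m, (WS W Finset.univ m).card = (n + m - 1).choose m) :
    IsAcyclicTournament W := by
  classical
  have hcwu : CWU W := cwu_of_counts n hn hcard hbF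
  have hloops : ∀ x : X, (x, x) ∉ W := no_loops hn hcard hbF hcwu
  -- closed walks are constant
  have hconst : ∀ (v : X) (c : List X), IsCW W Finset.univ v c → ∀ b ∈ c, b = v := by
    intro v c hc b hb
    obtain ⟨hch, hcl, hlen, hcc, _⟩ := hc
    have hrep : c = List.replicate c.length v := by
      refine hcwu v c (List.replicate c.length v) hch ?_ hcl ?_ hcc ?_ (by simp)
      · rw [List.head?_replicate, if_neg (by omega)]
      · rw [List.getLast?_replicate, if_neg (by omega)]
      · exact List.chain'_replicate_of_rel _ (hloops v)
    rw [hrep] at hb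
    exact List.eq_of_mem_replicate hb
  -- no 2-cycles in the complement
  have hnotwo : ∀ u v : X, u ≠ v → (u, v) ∉ W → (v, u) ∉ W → False := by
    intro u v huv h1 h2
    have hcw : IsCW W Finset.univ u [u, v, u] := by
      refine ⟨rfl, rfl, by simp, ?_, fun a _ => Finset.mem_univ a⟩
      rw [List.chain'_cons]
      exact ⟨h1, List.chain'_pair.mpr h2⟩
    have := hconst u [u, v, u] hcw v (by simp)
    exact huv this.symm
  -- counting: each unordered pair has at least one direction not in W
  have hatleast : ∀ u v : X, u ≠ v → (u, v) ∉ W ∨ (v, u) ∉ W := by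
    intro u v huv
    by_contra hcon
    push_neg at hcon
    obtain ⟨hw1, hw2⟩ := hcon
    -- count edges of the complement
    set Ep : Finset (X × X) := Finset.univ.filter (fun p : X × X => p ∉ W) with hEp
    have hEpcard : Ep.card = (n + 1).choose 2 := by
      have himg : Ep.image (fun p : X × X => [p.1, p.2]) = WS W Finset.univ 2 := by
        ext l
        simp only [Finset.mem_image, hEp, Finset.mem_filter, Finset.mem_univ, true_and]
        constructor
        · rintro ⟨p, hp, rfl⟩
          rw [mem_WS]
          refine ⟨by simp, List.chain'_pair.mpr hp, fun b _ => Finset.mem_univ b⟩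
        · intro hl
          obtain ⟨hlen, hch, _⟩ := mem_WS.mp hl
          obtain ⟨b, b', rfl⟩ := List.length_eq_two.mp hlen
          exact ⟨(b, b'), List.chain'_pair.mp hch, rfl⟩
      have hinj : Set.InjOn (fun p : X × X => [p.1, p.2]) ↑Ep := by
        intro p _ p' _ h
        simp only [List.cons.injEq] at h
        exact Prod.ext h.1 h.2.1
      rw [← Finset.card_image_of_injOn hinj, himg, hbF 2]
      have h21 : n + 2 - 1 = n + 1 := by omega
      rw [h21]
    set diag : Finset (X × X) := Ep.filter (fun p => p.1 = p.2) with hdiag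
    set offd : Finset (X × X) := Ep.filter (fun p => ¬ p.1 = p.2) with hoffd
    have hsplit : diag.card + offd.card = Ep.card :=
      Finset.card_filter_add_card_filter_not _
    have hdiagcard : diag.card = n := by
      have : diag = Finset.univ.image (fun u : X => (u, u)) := by
        ext p
        simp only [hdiag, hEp, Finset.mem_filter, Finset.mem_univ, true_and,
          Finset.mem_image]
        constructor
        · rintro ⟨h1, h2⟩
          exact ⟨p.1, Prod.ext rfl h2⟩
        · rintro ⟨u, rfl⟩
          exact ⟨hloops u, rfl⟩
      rw [this, Finset.card_image_of_injective _ (fun u u' h => (Prod.mk.injEq _ _ _ _).mp h |>.1),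
        Finset.card_univ, hcard]
    have hoffcard : offd.card = n.choose 2 := by
      have hpascal : (n + 1).choose 2 = n + n.choose 2 := by
        rw [show (2 : ℕ) = 1 + 1 from rfl, Nat.choose_succ_succ]
        simp
      omega
    -- map to unordered pairs
    set φ : X × X → Finset X := fun p => {p.1, p.2} with hφ
    have hmapsto : ∀ p ∈ offd, φ p ∈ Finset.powersetCard 2 Finset.univ := by
      intro p hp
      simp only [hoffd, Finset.mem_filter] at hp
      rw [Finset.mem_powersetCard]
      exact ⟨Finset.subset_univ _, Finset.card_pair hp.2⟩
    have hinjφ : Set.InjOn φ ↑offd := by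
      intro p hp p' hp' h
      have hp1 := Finset.mem_coe.mp hp
      have hp1' := Finset.mem_coe.mp hp'
      rw [hoffd, Finset.mem_filter, hEp, Finset.mem_filter] at hp1 hp1'
      obtain ⟨⟨_, hpW⟩, hpne⟩ := hp1
      obtain ⟨⟨_, hpW'⟩, hpne'⟩ := hp1'
      have hpair : p.1 = p'.1 ∧ p.2 = p'.2 ∨ p.1 = p'.2 ∧ p.2 = p'.1 := by
        have hcoe : ({p.1, p.2} : Set X) = {p'.1, p'.2} := by
          have := congrArg (fun s : Finset X => (s : Set X)) h
          simpa [hφ] using this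
        exact Set.pair_eq_pair_iff.mp hcoe
      rcases hpair with ⟨e1, e2⟩ | ⟨e1, e2⟩
      · exact Prod.ext e1 e2
      · exfalso
        refine hnotwo p.1 p.2 hpne hpW ?_
        have hpp : (p.2, p.1) = p' := Prod.ext e2 e1
        rw [hpp]
        exact hpW'
    have himg2 : offd.image φ = Finset.powersetCard 2 Finset.univ := by
      refine Finset.eq_of_subset_of_card_le ?_ ?_
      · intro A hA
        obtain ⟨p, hp, rfl⟩ := Finset.mem_image.mp hA
        exact hmapsto p hp
      · rw [Finset.card_powersetCard, Finset.card_univ, hcard,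
          Finset.card_image_of_injOn hinjφ, hoffcard]
    have hxy : ({u, v} : Finset X) ∈ offd.image φ := by
      rw [himg2, Finset.mem_powersetCard]
      exact ⟨Finset.subset_univ _, Finset.card_pair huv⟩
    obtain ⟨p, hp, hpeq⟩ := Finset.mem_image.mp hxy
    rw [hoffd, Finset.mem_filter, hEp, Finset.mem_filter] at hp
    obtain ⟨⟨_, hpW⟩, hpne⟩ := hp
    have hpair : p.1 = u ∧ p.2 = v ∨ p.1 = v ∧ p.2 = u := by
      have hcoe : ({p.1, p.2} : Set X) = {u, v} := by
        have := congrArg (fun s : Finset X => (s : Set X)) hpeq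
        simpa [hφ] using this
      exact Set.pair_eq_pair_iff.mp hcoe
    rcases hpair with ⟨e1, e2⟩ | ⟨e1, e2⟩
    · apply hpW
      rw [show p = (u, v) from Prod.ext e1 e2]
      exact hw1
    · apply hpW
      rw [show p = (v, u) from Prod.ext e1 e2]
      exact hw2
  have hXor : ∀ x y : X, x ≠ y → Xor' ((x, y) ∈ W) ((y, x) ∈ W) := by
    intro x y hxy
    rcases Classical.em ((x, y) ∈ W) with hin | hout
    · left
      refine ⟨hin, ?_⟩
      intro hyx
      rcases hatleast x y hxy with h | h
      · exact h hin
      · exact h hyx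
    · right
      refine ⟨?_, hout⟩
      by_contra hq
      exact hnotwo x y hxy hout hq
  refine ⟨hloops, hXor, ?_⟩
  intro x hTG
  obtain ⟨b, hxb, hRT⟩ := Relation.TransGen.head'_iff.mp hTG
  obtain ⟨l, hchain, hlast⟩ := List.exists_chain_of_relationReflTransGen hRT
  set L := x :: b :: l with hL
  have hchL : L.Chain' (fun p q : X => (p, q) ∈ W) := by
    rw [hL]
    exact List.Chain.cons hxb hchain
  have hlastL : L.getLast? = some x := by
    rw [hL, List.getLast?_eq_getLast (by simp),
      List.getLast_cons (by simp : (b :: l) ≠ [])]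
    rw [hlast]
  have hrev : IsCW W Finset.univ x L.reverse := by
    refine ⟨?_, ?_, ?_, ?_, fun a _ => Finset.mem_univ a⟩
    · rw [List.head?_reverse]; exact hlastL
    · rw [List.getLast?_reverse, hL]; rfl
    · rw [List.length_reverse, hL]; simp
    · rw [List.chain'_reverse]
      refine hchL.imp ?_
      intro p q hpq
      show (q, p) ∉ W
      have hne : p ≠ q := by
        rintro rfl
        exact hloops p hpq
      rcases hXor p q hne with ⟨_, h⟩ | ⟨h, hnp⟩
      · exact h
      · exact absurd hpq hnp
  have hbx : b = x :=
    hconst x L.reverse hrev b (by rw [List.mem_reverse, hL]; simp)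
  rw [hbx] at hxb
  exact hloops x hxb


lemma step13 (hcard : Fintype.card X = n) (h : IsAcyclicTournament W) :
    ∃ y : Fin n ≃ X, W = {p : X × X | ∃ i j : Fin n, i < j ∧ p = (y j, y i)} := by
  obtain ⟨h1, h2, h3⟩ := h
  have hnotboth : ∀ a b : X, (a, b) ∈ W → (b, a) ∈ W → False := by
    intro a b hab hba
    rcases eq_or_ne a b with rfl | hne
    · exact h1 a hab
    · rcases h2 a b hne with ⟨_, h'⟩ | ⟨_, h'⟩ <;> exact h' (by assumption)
  have htrans : ∀ a b c : X, (b, a) ∈ W → (c, b) ∈ W → (c, a) ∈ W := by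
    intro a b c hba hcb
    by_contra hca
    rcases eq_or_ne a c with rfl | hne
    · exact h3 a (Relation.TransGen.head hcb (Relation.TransGen.single hba))
    · rcases h2 a c hne with ⟨hac, _⟩ | ⟨hca', _⟩
      · exact h3 a (Relation.TransGen.head hac
          (Relation.TransGen.head hcb (Relation.TransGen.single hba)))
      · exact hca hca'
  letI : LinearOrder X :=
    { le := fun a b => a = b ∨ (b, a) ∈ W
      le_refl := fun a => Or.inl rfl
      le_trans := by
        rintro a b c (rfl | hab) h2'
        · exact h2'
        · rcases h2' with rfl | hbc
          · exact Or.inr hab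
          · exact Or.inr (htrans a b c hab hbc)
      le_antisymm := by
        rintro a b (rfl | hab) h2'
        · rfl
        · rcases h2' with rfl | hba
          · rfl
          · exact (hnotboth a b hba hab).elim
      le_total := by
        intro a b
        rcases eq_or_ne a b with rfl | hne
        · exact Or.inl (Or.inl rfl)
        · rcases h2 a b hne with ⟨hab, _⟩ | ⟨hba, _⟩
          · exact Or.inr (Or.inr hab)
          · exact Or.inl (Or.inr hba)
      toDecidableLE := Classical.decRel _ }
  have hlt : ∀ a b : X, a < b ↔ (b, a) ∈ W := by
    intro a b
    rw [lt_iff_le_not_ge]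
    constructor
    · rintro ⟨rfl | hba, hnle⟩
      · exact absurd (Or.inl rfl) hnle
      · exact hba
    · intro hba
      refine ⟨Or.inr hba, ?_⟩
      rintro (heq | hab)
      · exact h1 a (heq ▸ hba)
      · exact hnotboth a b hab hba
  refine ⟨(monoEquivOfFin X hcard).toEquiv, ?_⟩
  ext ⟨a, b⟩
  constructor
  · intro hab
    refine ⟨(monoEquivOfFin X hcard).symm b, (monoEquivOfFin X hcard).symm a, ?_, by simp⟩
    exact (monoEquivOfFin X hcard).symm.lt_iff_lt.mpr ((hlt b a).mpr hab)
  · rintro ⟨i, j, hij, heq⟩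
    simp only [Prod.mk.injEq, Equiv.coe_fn_mk] at heq
    obtain ⟨ha, hb⟩ := heq
    subst ha; subst hb
    exact (hlt _ _).mp ((monoEquivOfFin X hcard).lt_iff_lt.mpr hij)


/-- ordered monomial over `Fin n` -/
def gword (n : ℕ) (α : Fin n → ℕ) : List (Fin n) :=
  ((List.finRange n).map (fun i => List.replicate (α i) i)).flatten

def fword (y : Fin n ≃ X) (α : Fin n → ℕ) : List X :=
  ((List.finRange n).map (fun i => List.replicate (α i) (y i))).flatten

lemma map_gword (y : Fin n ≃ X) (α : Fin n → ℕ) :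
    (gword n α).map y = fword y α := by
  simp [gword, fword, List.map_flatten, List.map_map, Function.comp_def, List.map_replicate]

lemma map_fword (y : Fin n ≃ X) (α : Fin n → ℕ) :
    (fword y α).map y.symm = gword n α := by
  simp [gword, fword, List.map_flatten, List.map_map, Function.comp_def, List.map_replicate]

lemma count_gword (α : Fin n → ℕ) (i : Fin n) : (gword n α).count i = α i := by
  rw [gword, List.count_flatten, List.map_map]
  have : ((List.finRange n).map (List.count i ∘ fun i_1 => List.replicate (α i_1) i_1))
      = (List.finRange n).map (fun j => if j = i then α j else 0) := by
    apply List.map_congr_left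
    intro j _
    simp [List.count_replicate]
  rw [this, ← List.ofFn_eq_map, List.sum_ofFn]
  simp

lemma count_fword [DecidableEq X] (y : Fin n ≃ X) (α : Fin n → ℕ) (i : Fin n) :
    (fword y α).count (y i) = α i := by
  rw [← map_gword]
  rw [List.count_map_of_injective _ _ y.injective]
  exact count_gword α i

lemma length_fword (y : Fin n ≃ X) (α : Fin n → ℕ) :
    (fword y α).length = ∑ i, α i := by
  rw [fword, List.length_flatten, List.map_map]
  have : ((List.finRange n).map (List.length ∘ fun i => List.replicate (α i) (y i)))
      = (List.finRange n).map α := by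
    apply List.map_congr_left; intro j _; simp
  rw [this, ← List.ofFn_eq_map, List.sum_ofFn]

lemma sorted_gword (α : Fin n → ℕ) : (gword n α).Chain' (· ≤ ·) := by
  rw [List.chain'_iff_pairwise, gword, List.pairwise_flatten]
  refine ⟨?_, ?_⟩
  · intro l hl
    simp only [List.mem_map] at hl
    obtain ⟨i, _, rfl⟩ := hl
    exact List.pairwise_replicate.mpr (Or.inr le_rfl)
  · refine List.Pairwise.map _ ?_ (List.pairwise_lt_finRange n)
    intro i j hij x hx z hz
    rw [List.eq_of_mem_replicate hx, List.eq_of_mem_replicate hz]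
    exact hij.le

lemma memW_iff (y : Fin n ≃ X)
    (hW : W = {p : X × X | ∃ i j : Fin n, i < j ∧ p = (y j, y i)}) (a b : X) :
    (a, b) ∈ W ↔ y.symm b < y.symm a := by
  rw [hW]
  constructor
  · rintro ⟨i, j, hij, heq⟩
    simp only [Prod.mk.injEq] at heq
    obtain ⟨rfl, rfl⟩ := heq
    simpa using hij
  · intro h
    exact ⟨y.symm b, y.symm a, h, by simp⟩

lemma normal_iff (y : Fin n ≃ X)
    (hW : W = {p : X × X | ∃ i j : Fin n, i < j ∧ p = (y j, y i)}) (l : List X) :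
    IsNormalWord W l ↔ (l.map y.symm).Chain' (· ≤ ·) := by
  rw [IsNormalWord, List.chain'_map]
  constructor <;> refine fun h => h.imp ?_ <;> intro a b
  · intro hab
    rw [memW_iff y hW] at hab
    exact not_lt.mp hab
  · intro hab
    rw [memW_iff y hW]
    exact not_lt.mpr hab

lemma step34 (y : Fin n ≃ X)
    (hW : W = {p : X × X | ∃ i j : Fin n, i < j ∧ p = (y j, y i)}) :
    {l : List X | IsNormalWord W l} =
      {l : List X | ∃ α : Fin n → ℕ, l = fword y α} := by
  ext l
  simp only [Set.mem_setOf_eq]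
  constructor
  · intro hl
    rw [normal_iff y hW] at hl
    set s := l.map y.symm with hs
    obtain ⟨α, hα⟩ : ∃ α : Fin n → ℕ, s = gword n α := by
      refine ⟨fun i => s.count i, ?_⟩
      refine List.eq_of_perm_of_sorted ?_ (List.chain'_iff_pairwise.mp hl)
        (List.chain'_iff_pairwise.mp (sorted_gword _))
      rw [List.perm_iff_count]
      intro i
      rw [count_gword]
    have hly : l = s.map y := by
      rw [hs, List.map_map]
      simp
    exact ⟨α, by rw [hly, hα, map_gword]⟩
  · rintro ⟨α, rfl⟩
    rw [normal_iff y hW, map_fword]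
    exact sorted_gword α

lemma step42 (hcard : Fintype.card X = n) (y : Fin n ≃ X)
    (hd : {l : List X | IsNormalWord W l} =
      {l : List X | ∃ α : Fin n → ℕ, l = fword y α}) (m : ℕ) :
    {l : List X | l.length = m ∧ IsNormalWord W l}.ncard = (n + m - 1).choose m := by
  classical
  set Φ : Sym X m → List X := fun s => fword y (fun i => Multiset.count (y i) (s : Multiset X))
    with hΦ
  have hsum : ∀ s : Sym X m, (∑ i, Multiset.count (y i) (s : Multiset X)) = m := by
    intro s
    rw [Equiv.sum_comp y (fun a => Multiset.count a (s : Multiset X))]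
    have : ∑ a : X, Multiset.count a (s : Multiset X)
        = ∑ a ∈ (s : Multiset X).toFinset, Multiset.count a (s : Multiset X) := by
      refine (Finset.sum_subset (Finset.subset_univ _) ?_).symm
      intro a _ ha
      simpa [Multiset.count_eq_zero] using ha
    rw [this, Multiset.toFinset_sum_count_eq]
    exact s.2
  have himg : {l : List X | l.length = m ∧ IsNormalWord W l} = Φ '' Set.univ := by
    ext l
    simp only [Set.image_univ, Set.mem_setOf_eq, Set.mem_range]
    constructor
    · rintro ⟨hlen, hnorm⟩
      have : l ∈ {l : List X | ∃ α : Fin n → ℕ, l = fword y α} := hd ▸ hnorm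
      obtain ⟨α, rfl⟩ := this
      refine ⟨⟨(fword y α : List X), by simpa using hlen⟩, ?_⟩
      simp only [hΦ, Sym.coe_mk]
      congr 1
      funext i
      rw [Multiset.coe_count, count_fword]
    · rintro ⟨s, rfl⟩
      constructor
      · rw [hΦ]
        simp only
        rw [length_fword, hsum]
      · have : Φ s ∈ {l : List X | ∃ α : Fin n → ℕ, l = fword y α} := ⟨_, rfl⟩
        rw [← hd] at this
        exact this
  have hinj : Function.Injective Φ := by
    intro s t hst
    have hc : ∀ i, Multiset.count (y i) (s : Multiset X) = Multiset.count (y i) (t : Multiset X) := by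
      intro i
      have := congrArg (fun l => List.count (y i) l) hst
      simp only [hΦ] at this
      rwa [count_fword, count_fword] at this
    apply Sym.coe_injective
    ext a
    have := hc (y.symm a)
    simpa using this
  rw [himg, Set.ncard_image_of_injective _ hinj, Set.ncard_univ, Nat.card_eq_fintype_card,
    Sym.card_sym_eq_choose, hcard]


lemma WS_card_eq (W : Set (X × X)) (m : ℕ) :
    (WS W Finset.univ m).card = {l : List X | l.length = m ∧ IsNormalWord W l}.ncard := by
  rw [← Set.ncard_coe_finset]
  congr 1
  ext l
  rw [Finset.mem_coe, mem_WS]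
  simp only [Set.mem_setOf_eq]
  constructor
  · rintro ⟨h1, h2, _⟩; exact ⟨h1, h2⟩
  · rintro ⟨h1, h2⟩; exact ⟨h1, h2, fun a _ => Finset.mem_univ a⟩

end Main
end MonTFAE

/-- For an alphabet X of n ≥ 1 letters and a set W of words of length 2, the
following are equivalent: (a) Γ_W is an acyclic tournament; (b) the number of
normal words of length m is C(n+m-1, m) for all m; (c) for some enumeration
y₁,…,yₙ of X, W = {y_j y_i : i < j}; (d) for some enumeration y₁,…,yₙ of X the
set of normal words is exactly the set of ordered monomials y₁^{α₁} ⋯ yₙ^{αₙ}. -/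
theorem monomial_algebra_tfae {X : Type*} [Fintype X] (n : ℕ) (hn : 1 ≤ n)
    (hcard : Fintype.card X = n) (W : Set (X × X)) :
    [ IsAcyclicTournament W,
      (∀ m : ℕ, {l : List X | l.length = m ∧ IsNormalWord W l}.ncard
          = (n + m - 1).choose m),
      (∃ y : Fin n ≃ X, W = {p : X × X | ∃ i j : Fin n, i < j ∧ p = (y j, y i)}),
      (∃ y : Fin n ≃ X, {l : List X | IsNormalWord W l} =
          {l : List X | ∃ α : Fin n → ℕ,
            l = ((List.finRange n).map (fun i => List.replicate (α i) (y i))).flatten})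
    ].TFAE := by
  classical
  letI : DecidableEq X := Classical.decEq X
  tfae_have 1 → 3 := fun h => MonTFAE.step13 hcard h
  tfae_have 3 → 4 := by
    rintro ⟨y, hW⟩
    exact ⟨y, MonTFAE.step34 y hW⟩
  tfae_have 4 → 2 := by
    rintro ⟨y, hd⟩
    intro m
    exact MonTFAE.step42 hcard y hd m
  tfae_have 2 → 1 := by
    intro hb
    refine MonTFAE.step21 hn hcard ?_
    intro m
    rw [MonTFAE.WS_card_eq, hb m]
  tfae_finish
end

section
/- Fix n ≥ 1, an alphabet X = {x₁,…,xₙ} and a set W ⊆ X² of words of length 2 over X. Then the following are equivalent: (a) |W| = C(n,2) = n(n−1)/2, W contains no word of the form xx with x ∈ X, and the counting function m ↦ |N^(m)| of normal words is bounded by a polynomial in m (i.e. there exist constants C > 0 and d ∈ ℕ such that |N^(m)| ≤ C·(m+1)^d for all m ≥ 0); (b) the graph Γ_W is an acyclic tournament. -/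
section Aux

open Relation

variable {X : Type*}

private lemma growth_helper (C d : ℕ) : ∃ m : ℕ, C * (m + 2) ^ d < 2 ^ m := by
  set A := C * (d + 1) ^ d * 2 ^ d with hA
  refine ⟨(d + 1) * A, ?_⟩
  have key1 : (d + 1) * A + 2 ≤ (d + 1) * (A + 2) := by nlinarith
  have key2 : A + 2 ≤ 2 ^ (A + 1) := by
    have h1 := (Nat.lt_two_pow_self (n := A))
    have h2 : 2 ^ (A + 1) = 2 * 2 ^ A := by ring
    omega
  calc C * ((d + 1) * A + 2) ^ d
      ≤ C * ((d + 1) * (A + 2)) ^ d := by gcongr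
    _ ≤ C * ((d + 1) * 2 ^ (A + 1)) ^ d := by gcongr
    _ = A * 2 ^ (A * d) := by
        rw [mul_pow, ← pow_mul, show (A + 1) * d = A * d + d by ring, pow_add, hA]
        ring
    _ < 2 ^ A * 2 ^ (A * d) := by
        exact mul_lt_mul_of_pos_right ((Nat.lt_two_pow_self (n := A))) (by positivity)
    _ = 2 ^ ((d + 1) * A) := by rw [← pow_add]; congr 1; ring

private lemma exists_walk {r : X → X → Prop} {x : X} (h : Relation.TransGen r x x) :
    ∃ u : ℕ → X, ∀ i, r (u i) (u (i + 1)) := by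
  classical
  have step : ∀ a : X, TransGen r a a → ∃ b, r a b ∧ TransGen r b b := by
    intro a ha
    obtain ⟨b, hab, hba⟩ := (Relation.TransGen.head'_iff).mp ha
    exact ⟨b, hab, Relation.TransGen.tail' hba hab⟩
  choose f hf1 hf2 using step
  let g : {a : X // TransGen r a a} → {a : X // TransGen r a a} :=
    fun p => ⟨f p.1 p.2, hf2 p.1 p.2⟩
  refine ⟨fun i => (g^[i] ⟨x, h⟩).1, fun i => ?_⟩
  show r (g^[i] ⟨x, h⟩).1 (g^[i+1] ⟨x, h⟩).1
  rw [Function.iterate_succ_apply']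
  exact hf1 _ _

private def expandWord (u : ℕ → X) : ℕ → List Bool → List X
  | k, [] => [u k]
  | k, b :: s => u k :: expandWord u (if b then k + 1 else k) s

private lemma expandWord_length (u : ℕ → X) : ∀ (s : List Bool) (k : ℕ),
    (expandWord u k s).length = s.length + 1
  | [], _ => rfl
  | _ :: s, k => by simp [expandWord, expandWord_length u s]

private lemma expandWord_head? (u : ℕ → X) : ∀ (s : List Bool) (k : ℕ),
    (expandWord u k s).head? = some (u k)
  | [], _ => rfl
  | _ :: _, _ => rfl

private lemma expandWord_normal {W : Set (X × X)} (u : ℕ → X)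
    (hloop : ∀ a : X, (a, a) ∉ W) (hW : ∀ i, (u i, u (i + 1)) ∉ W) :
    ∀ (s : List Bool) (k : ℕ), IsNormalWord W (expandWord u k s) := by
  intro s
  induction s with
  | nil => intro k; exact List.isChain_singleton _
  | cons b s ih =>
    intro k
    show List.Chain' _ (u k :: expandWord u (if b then k + 1 else k) s)
    rw [List.Chain', List.isChain_cons]
    refine ⟨fun y hy => ?_, ih _⟩
    rw [expandWord_head?] at hy
    cases hy
    cases b
    · simpa using hloop (u k)
    · simpa using hW k

private lemma expandWord_inj (u : ℕ → X) (hne : ∀ i, u i ≠ u (i + 1)) :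
    ∀ (s₁ s₂ : List Bool) (k : ℕ), s₁.length = s₂.length →
      expandWord u k s₁ = expandWord u k s₂ → s₁ = s₂ := by
  intro s₁
  induction s₁ with
  | nil => intro s₂ k hl _; cases s₂ <;> simp_all
  | cons b₁ s₁ ih =>
    intro s₂ k hl heq
    cases s₂ with
    | nil => simp at hl
    | cons b₂ s₂ =>
      simp only [expandWord, List.cons.injEq] at heq
      have hb : b₁ = b₂ := by
        by_contra hb
        have h1 := expandWord_head? u s₁ (if b₁ then k + 1 else k)
        have h2 := expandWord_head? u s₂ (if b₂ then k + 1 else k)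
        rw [heq.2, h2] at h1
        cases b₁ <;> cases b₂
        · exact hb rfl
        · simp at h1
          exact hne k h1.symm
        · simp at h1
          exact hne k h1
        · exact hb rfl
      subst hb
      have := ih s₂ (if b₁ then k + 1 else k) (by simpa using hl) heq.2
      rw [this]

private lemma lower_bound [Fintype X] {W : Set (X × X)}
    (hloop : ∀ a : X, (a, a) ∉ W) (u : ℕ → X)
    (hW : ∀ i, (u i, u (i + 1)) ∉ W) (hne : ∀ i, u i ≠ u (i + 1)) (m : ℕ) :
    2 ^ m ≤ {l : List X | l.length = m + 1 ∧ IsNormalWord W l}.ncard := by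
  classical
  set S := {l : List X | l.length = m + 1 ∧ IsNormalWord W l} with hS
  have hfin : S.Finite := (List.finite_length_eq X (m + 1)).subset fun l hl => hl.1
  set g : (Fin m → Bool) → List X := fun f => expandWord u 0 (List.ofFn f) with hg
  have hginj : Function.Injective g := by
    intro f1 f2 h
    apply List.ofFn_injective
    exact expandWord_inj u hne _ _ 0 (by simp) h
  have himg : g '' Set.univ ⊆ S := by
    rintro _ ⟨f, -, rfl⟩
    exact ⟨by simp [hg, expandWord_length], expandWord_normal u hloop hW _ _⟩
  calc 2 ^ m = (Set.univ : Set (Fin m → Bool)).ncard := by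
        simp [Set.ncard_univ, Nat.card_eq_fintype_card]
    _ = (g '' Set.univ).ncard := (Set.ncard_image_of_injective _ hginj).symm
    _ ≤ S.ncard := Set.ncard_le_ncard himg hfin

private lemma offdiag_ncard [Fintype X] :
    {p : X × X | p.1 ≠ p.2}.ncard = Fintype.card X * Fintype.card X - Fintype.card X := by
  classical
  have h : {p : X × X | p.1 ≠ p.2} = ↑(Finset.univ.offDiag : Finset (X × X)) := by
    ext p; simp [Finset.mem_offDiag]
  rw [h, Set.ncard_coe_finset, Finset.offDiag_card]
  simp

private lemma union_swap_eq {W : Set (X × X)} (hloop : ∀ a : X, (a, a) ∉ W)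
    (htot : ∀ x y : X, x ≠ y → (x, y) ∈ W ∨ (y, x) ∈ W) :
    W ∪ Prod.swap '' W = {p : X × X | p.1 ≠ p.2} := by
  ext ⟨a, b⟩
  simp only [Set.mem_union, Set.mem_image, Set.mem_setOf_eq, Prod.exists, Prod.swap_prod_mk,
    Prod.mk.injEq]
  constructor
  · rintro (h | ⟨x, y, hxy, rfl, rfl⟩)
    · rintro rfl; exact hloop _ h
    · rintro rfl; exact hloop _ hxy
  · intro hab
    rcases htot a b hab with h | h
    · exact Or.inl h
    · exact Or.inr ⟨b, a, h, rfl, rfl⟩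

private lemma two_choose {n : ℕ} (hn : 1 ≤ n) : 2 * n.choose 2 = n * n - n := by
  rw [Nat.choose_two_right]
  rw [Nat.two_mul_div_two_of_even (Nat.even_mul_pred_self n)]
  rcases Nat.exists_eq_add_of_le hn with ⟨k, rfl⟩
  have h : (1 + k) * (1 + k - 1) = (1 + k) * (1 + k) - (1 + k) := by
    simp [Nat.add_sub_cancel_left, Nat.mul_add, Nat.add_mul]
  omega

end Aux

/-- For an alphabet X of n ≥ 1 letters and a set W of words of length 2, the
following are equivalent: (a) |W| = C(n,2), W contains no square xx, and the
number of normal words of length m grows at most polynomially in m;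
(b) the graph Γ_W is an acyclic tournament. -/
theorem monomial_algebra_polygrowth_iff_tournament {X : Type*} [Fintype X]
    (n : ℕ) (hn : 1 ≤ n) (hcard : Fintype.card X = n) (W : Set (X × X)) :
    (W.ncard = n.choose 2 ∧ (∀ x : X, (x, x) ∉ W) ∧
      ∃ C : ℕ, 0 < C ∧ ∃ d : ℕ, ∀ m : ℕ,
        {l : List X | l.length = m ∧ IsNormalWord W l}.ncard ≤ C * (m + 1) ^ d) ↔
    IsAcyclicTournament W := by
  classical
  constructor
  · rintro ⟨hcardW, hloop, C, hC, d, hbound⟩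
    have key : ∀ u : ℕ → X, (∀ i, (u i, u (i + 1)) ∉ W) → ∃ i, u i = u (i + 1) := by
      intro u hu
      by_contra hne
      push_neg at hne
      obtain ⟨m, hm⟩ := growth_helper C d
      have h1 := lower_bound hloop u hu hne m
      have h2 := hbound (m + 1)
      rw [show m + 1 + 1 = m + 2 by omega] at h2
      omega
    have htot : ∀ x y : X, x ≠ y → (x, y) ∈ W ∨ (y, x) ∈ W := by
      intro x y hxy
      by_contra h
      push_neg at h
      set u : ℕ → X := fun i => if i % 2 = 0 then x else y with hu
      have hmod : ∀ i : ℕ, (i % 2 = 0 ∧ ¬(i + 1) % 2 = 0) ∨ (¬i % 2 = 0 ∧ (i + 1) % 2 = 0) :=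
        fun i => by omega
      have hW : ∀ i, (u i, u (i + 1)) ∉ W := by
        intro i
        rcases hmod i with ⟨h1, h2⟩ | ⟨h1, h2⟩
        · simp only [hu, if_pos h1, if_neg h2]; exact h.1
        · simp only [hu, if_neg h1, if_pos h2]; exact h.2
      obtain ⟨i, hi⟩ := key u hW
      rcases hmod i with ⟨h1, h2⟩ | ⟨h1, h2⟩
      · simp only [hu, if_pos h1, if_neg h2] at hi; exact hxy hi
      · simp only [hu, if_neg h1, if_pos h2] at hi; exact hxy hi.symm
    have hWfin : W.Finite := Set.toFinite W
    have hW'fin : (Prod.swap '' W).Finite := hWfin.image _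
    have hcard' : (Prod.swap '' W).ncard = W.ncard :=
      Set.ncard_image_of_injective _ Prod.swap_injective
    have hsum := Set.ncard_union_add_ncard_inter W (Prod.swap '' W) hWfin hW'fin
    rw [union_swap_eq hloop htot, offdiag_ncard, hcard, hcard', hcardW] at hsum
    have hch := two_choose hn
    have h0 : (W ∩ Prod.swap '' W).ncard = 0 := by
      generalize n * n = q at hsum hch
      omega
    have hempty : W ∩ Prod.swap '' W = ∅ :=
      (Set.ncard_eq_zero (hWfin.inter_of_left _)).mp h0
    have hxor : ∀ x y : X, x ≠ y → Xor' ((x, y) ∈ W) ((y, x) ∈ W) := by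
      intro x y hxy
      rcases htot x y hxy with h | h
      · refine Or.inl ⟨h, fun h' => ?_⟩
        have hmem : (x, y) ∈ W ∩ Prod.swap '' W := ⟨h, (y, x), h', rfl⟩
        rw [hempty] at hmem
        exact hmem
      · refine Or.inr ⟨h, fun h' => ?_⟩
        have hmem : (x, y) ∈ W ∩ Prod.swap '' W := ⟨h', (y, x), h, rfl⟩
        rw [hempty] at hmem
        exact hmem
    refine ⟨hloop, hxor, fun x hx => ?_⟩
    have hx' : Relation.TransGen (Function.swap fun a b => (a, b) ∈ W) x x :=
      Relation.transGen_swap.mpr hx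
    obtain ⟨u, hu⟩ := exists_walk hx'
    have hu' : ∀ i, (u (i + 1), u i) ∈ W := hu
    have hune : ∀ i, u i ≠ u (i + 1) := by
      intro i h
      have hthis := hu' i
      rw [← h] at hthis
      exact hloop _ hthis
    have huW : ∀ i, (u i, u (i + 1)) ∉ W := by
      intro i hW'
      rcases hxor (u i) (u (i + 1)) (hune i) with ⟨h1, h2⟩ | ⟨h1, h2⟩
      · exact h2 (hu' i)
      · exact h2 hW'
    obtain ⟨i, hi⟩ := key u huW
    exact hune i hi
  · rintro ⟨hloop, hxor, hacyc⟩
    have htot : ∀ x y : X, x ≠ y → (x, y) ∈ W ∨ (y, x) ∈ W := by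
      intro x y hxy
      rcases hxor x y hxy with ⟨h1, _⟩ | ⟨h1, _⟩
      · exact Or.inl h1
      · exact Or.inr h1
    have htrans : Transitive (fun a b : X => (a, b) ∉ W) := by
      intro a b c hab hbc
      by_contra hac
      rcases eq_or_ne a b with rfl | hab'
      · exact hbc hac
      rcases eq_or_ne b c with rfl | hbc'
      · exact hab hac
      have hba : (b, a) ∈ W := by
        rcases hxor a b hab' with ⟨h1, _⟩ | ⟨h1, _⟩
        · exact absurd h1 hab
        · exact h1
      have hcb : (c, b) ∈ W := by
        rcases hxor b c hbc' with ⟨h1, _⟩ | ⟨h1, _⟩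
        · exact absurd h1 hbc
        · exact h1
      exact hacyc b (Relation.TransGen.head hba
        (Relation.TransGen.head hac (Relation.TransGen.single hcb)))
    have hantisymm : ∀ a b : X, (a, b) ∉ W → (b, a) ∉ W → a = b := by
      intro a b hab hba
      by_contra h
      rcases hxor a b h with ⟨h1, _⟩ | ⟨h1, _⟩
      · exact hab h1
      · exact hba h1
    refine ⟨?_, hloop, 1, one_pos, n, fun m => ?_⟩
    · have hWfin : W.Finite := Set.toFinite W
      have hW'fin : (Prod.swap '' W).Finite := hWfin.image _
      have hcard' : (Prod.swap '' W).ncard = W.ncard :=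
        Set.ncard_image_of_injective _ Prod.swap_injective
      have hsum := Set.ncard_union_add_ncard_inter W (Prod.swap '' W) hWfin hW'fin
      rw [union_swap_eq hloop htot, offdiag_ncard, hcard, hcard'] at hsum
      have hempty : W ∩ Prod.swap '' W = ∅ := by
        rw [Set.eq_empty_iff_forall_notMem]
        rintro ⟨a, b⟩ ⟨h1, ⟨x, y⟩, hxy, hswap⟩
        cases hswap
        have hxyne : x ≠ y := fun h => hloop _ (h ▸ hxy)
        rcases hxor x y hxyne with ⟨_, h2⟩ | ⟨_, h2⟩
        · exact h2 h1
        · exact h2 hxy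
      rw [hempty] at hsum
      simp only [Set.ncard_empty, Nat.add_zero] at hsum
      have hch := two_choose hn
      generalize n * n = q at hsum hch
      omega
    · haveI : IsTrans X (fun a b : X => (a, b) ∉ W) := ⟨htrans⟩
      haveI : IsAntisymm X (fun a b : X => (a, b) ∉ W) := ⟨hantisymm⟩
      set S := {l : List X | l.length = m ∧ IsNormalWord W l} with hS
      have hfin : S.Finite := (List.finite_length_eq X m).subset fun l hl => hl.1
      have hinj : Set.InjOn (fun (l : List X) (x : X) =>
          (⟨min (l.count x) m, by omega⟩ : Fin (m + 1))) S := by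
        intro l₁ h₁ l₂ h₂ heq
        have hcount : ∀ x : X, l₁.count x = l₂.count x := by
          intro x
          have e := congrFun heq x
          simp only [Fin.mk.injEq] at e
          have c1 : l₁.count x ≤ m := h₁.1 ▸ (l₁.count_le_length (a := x))
          have c2 : l₂.count x ≤ m := h₂.1 ▸ (l₂.count_le_length (a := x))
          omega
        have hperm : List.Perm l₁ l₂ := List.perm_iff_count.mpr hcount
        exact List.Perm.eq_of_pairwise (fun a b _ _ hab hba => antisymm hab hba)
          (List.isChain_iff_pairwise.mp h₁.2) (List.isChain_iff_pairwise.mp h₂.2) hperm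
      have hle : S.ncard ≤ (Set.univ : Set (X → Fin (m + 1))).ncard :=
        Set.ncard_le_ncard_of_injOn (fun (l : List X) (x : X) =>
          (⟨min (l.count x) m, by omega⟩ : Fin (m + 1)))
          (fun a _ => Set.mem_univ _) hinj (Set.toFinite _)
      calc S.ncard ≤ (Set.univ : Set (X → Fin (m + 1))).ncard := hle
        _ = (m + 1) ^ n := by
            rw [Set.ncard_univ, Nat.card_eq_fintype_card, Fintype.card_fun]
            simp [hcard]
        _ = 1 * (m + 1) ^ n := (one_mul _).symm
end
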